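/- arXiv:2210.13579 — 6 statements merged into one kernel-verified Lean document; each statement's English description precedes it below -/
import Mathlib

section
/- Let F₁,...,F_s be homogeneous elements of S[t] of the same degree e (with deg t = 0). Suppose there exist homogeneous degree e elements G₁,...,G_s ∈ S[t] such that (1) for every i there is dᵢ ≥ 0 with t^{dᵢ}·Gᵢ lying in the S[t]-span of F₁,...,F_s in degree e, and (2) the specializations G₁|_{t=0},...,G_s|_{t=0} are linearly independent over k. Then for all but finitely many λ ∈ k, the specializations F₁|_{t=λ},...,F_s|_{t=λ} are linearly independent over k. -/
set_option maxHeartbeats 1000000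
set_option synthInstance.maxHeartbeats 400000

open MvPolynomial Polynomial

/-- Specialization `t = λ` of an element of `S[t]` (with `S[t]` modelled as
`MvPolynomial σ k[t]`, so that `t` has degree `0`). -/
noncomputable def specialize {σ : Type*} {k : Type*} [Field k] (lam : k)
    (F : MvPolynomial σ (Polynomial k)) : MvPolynomial σ k :=
  MvPolynomial.map (Polynomial.evalRingHom lam) F

section Aux

variable {σ k : Type*} [Field k] {s : ℕ}

lemma specialize_smul (lam : k) (c : Polynomial k)
    (p : MvPolynomial σ (Polynomial k)) :
    specialize lam (c • p) = (Polynomial.eval lam c) • specialize lam p := by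
  simp [specialize, MvPolynomial.smul_eq_C_mul]

lemma specialize_sum {ι : Type*} (lam : k) (t : Finset ι)
    (f : ι → MvPolynomial σ (Polynomial k)) :
    specialize lam (∑ i ∈ t, f i) = ∑ i ∈ t, specialize lam (f i) :=
  map_sum _ _ _

/-- Step 1: a family whose specializations at `0` are `k`-independent is
`k[t]`-independent. -/
lemma indep_base (G : Fin s → MvPolynomial σ (Polynomial k))
    (hindep : LinearIndependent k fun i => specialize (0 : k) (G i)) :
    LinearIndependent (Polynomial k) G := by
  rw [Fintype.linearIndependent_iff]
  suffices H : ∀ N : ℕ, ∀ c : Fin s → Polynomial k, (∀ i, (c i).natDegree ≤ N) →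
      (∑ i, c i • G i = 0) → ∀ i, c i = 0 by
    intro c hc
    exact H (Finset.univ.sup fun i => (c i).natDegree) c
      (fun i => Finset.le_sup (f := fun i => (c i).natDegree) (Finset.mem_univ i)) hc
  have key : ∀ c : Fin s → Polynomial k, (∑ i, c i • G i = 0) →
      ∀ j, Polynomial.eval 0 (c j) = 0 := by
    intro c hsum
    have h1 := congrArg (specialize (0 : k)) hsum
    rw [specialize_sum] at h1
    simp only [specialize_smul] at h1
    rw [show specialize (0:k) 0 = 0 from map_zero _] at h1
    exact Fintype.linearIndependent_iff.mp hindep _ h1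
  intro N
  induction N with
  | zero =>
    intro c hc hsum i
    rw [Polynomial.eq_C_of_natDegree_le_zero (hc i)]
    rw [Polynomial.coeff_zero_eq_eval_zero, key c hsum i]
    simp
  | succ N ih =>
    intro c hc hsum
    have hdvd : ∀ j, (X : Polynomial k) ∣ c j := by
      intro j
      rw [Polynomial.X_dvd_iff, Polynomial.coeff_zero_eq_eval_zero]
      exact key c hsum j
    choose c' hc' using hdvd
    have hdeg : ∀ j, (c' j).natDegree ≤ N := by
      intro j
      rcases eq_or_ne (c' j) 0 with h | h
      · simp [h]
      · have h2 : (c j).natDegree = 1 + (c' j).natDegree := by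
          rw [hc' j, Polynomial.natDegree_mul Polynomial.X_ne_zero h, Polynomial.natDegree_X]
        have h3 := hc j
        omega
    have hsum' : ∑ i, c' i • G i = 0 := by
      have h4 : (X : Polynomial k) • ∑ i, c' i • G i = 0 := by
        rw [Finset.smul_sum]
        simpa [hc', mul_smul] using hsum
      rcases smul_eq_zero.mp h4 with h | h
      · exact absurd h Polynomial.X_ne_zero
      · exact h
    intro i
    rw [hc' i, ih c' hdeg hsum' i, mul_zero]

/-- The base-change map `S[t] → S ⊗ k(t)`. -/
noncomputable def phi (σ k : Type*) [Field k] :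
    MvPolynomial σ (Polynomial k) →+* MvPolynomial σ (RatFunc k) :=
  MvPolynomial.map (algebraMap (Polynomial k) (RatFunc k))

lemma phi_injective : Function.Injective (phi σ k) :=
  MvPolynomial.map_injective _ (IsFractionRing.injective _ _)

lemma phi_smul (a : Polynomial k) (p : MvPolynomial σ (Polynomial k)) :
    phi σ k (a • p) = (algebraMap (Polynomial k) (RatFunc k) a) • phi σ k p := by
  rw [MvPolynomial.smul_eq_C_mul, MvPolynomial.smul_eq_C_mul]
  show MvPolynomial.map _ _ = _
  rw [map_mul, MvPolynomial.map_C]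
  rfl

/-- Step 2a: `k[t]`-independence implies `k(t)`-independence after base change. -/
lemma indep_K (G : Fin s → MvPolynomial σ (Polynomial k))
    (h : LinearIndependent (Polynomial k) G) :
    LinearIndependent (RatFunc k) (fun i => phi σ k (G i)) := by
  rw [Fintype.linearIndependent_iff]
  intro c hc
  obtain ⟨b, hb⟩ := IsLocalization.exist_integer_multiples_of_finite
    (nonZeroDivisors (Polynomial k)) c
  choose a ha using hb
  have hzero : ∑ i, a i • G i = 0 := by
    apply phi_injective
    rw [map_sum, map_zero]
    have : ∀ i, phi σ k (a i • G i)
        = (algebraMap (Polynomial k) (RatFunc k) (b : Polynomial k)) • (c i • phi σ k (G i)) := by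
      intro i
      rw [phi_smul, ha i,
        show ((b : Polynomial k) • c i)
            = algebraMap (Polynomial k) (RatFunc k) (b : Polynomial k) * c i
          from Algebra.smul_def _ _, mul_smul]
    rw [Finset.sum_congr rfl fun i _ => this i, ← Finset.smul_sum, hc, smul_zero]
  have ha0 : ∀ i, a i = 0 := Fintype.linearIndependent_iff.mp h a hzero
  intro i
  have h1 : algebraMap (Polynomial k) (RatFunc k) (b : Polynomial k) * c i = 0 := by
    rw [← Algebra.smul_def, ← ha i, ha0 i, map_zero]
  have hb0 : algebraMap (Polynomial k) (RatFunc k) (b : Polynomial k) ≠ 0 := by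
    simpa using nonZeroDivisors.ne_zero b.2
  exact (mul_eq_zero.mp h1).resolve_left hb0

/-- Step 2b: the `F i` are `k(t)`-independent after base change. -/
lemma indep_F (F G : Fin s → MvPolynomial σ (Polynomial k))
    (hspan : ∀ i, ∃ d : ℕ,
      (MvPolynomial.C (Polynomial.X : Polynomial k)) ^ d * G i ∈
        Submodule.span (Polynomial k) (Set.range F))
    (hG : LinearIndependent (RatFunc k) (fun i => phi σ k (G i))) :
    LinearIndependent (RatFunc k) (fun i => phi σ k (F i)) := by
  set F' : Fin s → MvPolynomial σ (RatFunc k) := fun i => phi σ k (F i) with hF'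
  have hmap : ∀ x ∈ Submodule.span (Polynomial k) (Set.range F),
      phi σ k x ∈ Submodule.span (RatFunc k) (Set.range F') := by
    intro x hx
    induction hx using Submodule.span_induction with
    | mem y hy =>
      obtain ⟨j, rfl⟩ := hy
      exact Submodule.subset_span ⟨j, rfl⟩
    | zero => rw [map_zero]; exact Submodule.zero_mem _
    | add y z _ _ hy hz => rw [map_add]; exact Submodule.add_mem _ hy hz
    | smul a y _ hy => rw [phi_smul]; exact Submodule.smul_mem _ _ hy
  have hGmem : ∀ i, phi σ k (G i) ∈ Submodule.span (RatFunc k) (Set.range F') := by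
    intro i
    obtain ⟨d, hd⟩ := hspan i
    have h1 := hmap _ hd
    have h2 : phi σ k ((MvPolynomial.C (Polynomial.X : Polynomial k)) ^ d * G i)
        = ((algebraMap (Polynomial k) (RatFunc k) Polynomial.X) ^ d) • phi σ k (G i) := by
      rw [map_mul, map_pow]
      simp [phi, MvPolynomial.smul_eq_C_mul]
    rw [h2] at h1
    have hu : ((algebraMap (Polynomial k) (RatFunc k) Polynomial.X) ^ d) ≠ 0 := by
      apply pow_ne_zero
      simpa using (IsFractionRing.injective (Polynomial k) (RatFunc k)).ne_iff.mpr
        (Polynomial.X_ne_zero (R := k))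
    have := Submodule.smul_mem (Submodule.span (RatFunc k) (Set.range F'))
      (((algebraMap (Polynomial k) (RatFunc k) Polynomial.X) ^ d)⁻¹) h1
    rwa [smul_smul, inv_mul_cancel₀ hu, one_smul] at this
  have hfin : FiniteDimensional (RatFunc k) (Submodule.span (RatFunc k) (Set.range F')) :=
    FiniteDimensional.span_of_finite _ (Set.finite_range F')
  let G'' : Fin s → Submodule.span (RatFunc k) (Set.range F') :=
    fun i => ⟨phi σ k (G i), hGmem i⟩
  have hG'' : LinearIndependent (RatFunc k) G'' := by
    apply LinearIndependent.of_comp (Submodule.span (RatFunc k) (Set.range F')).subtype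
    exact hG
  have hcard : Fintype.card (Fin s)
      ≤ Module.finrank (RatFunc k) (Submodule.span (RatFunc k) (Set.range F')) :=
    hG''.fintype_card_le_finrank
  rw [linearIndependent_iff_card_le_finrank_span]
  exact hcard

/-- Step 3: from `k(t)`-independence, extract monomials giving a nonzero minor. -/
lemma exists_good_det (F : Fin s → MvPolynomial σ (Polynomial k))
    (hF' : LinearIndependent (RatFunc k) (fun i => phi σ k (F i))) :
    ∃ m : Fin s → (σ →₀ ℕ),
      (Matrix.of fun i j => MvPolynomial.coeff (m j) (F i)).det ≠ 0 := by
  classical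
  set T : Finset (σ →₀ ℕ) := Finset.univ.biUnion fun i => (F i).support with hT
  set A : Matrix (Fin s) T (Polynomial k) := Matrix.of fun i m => MvPolynomial.coeff m.1 (F i)
    with hA
  set Abar : Matrix (Fin s) T (RatFunc k) := A.map (algebraMap (Polynomial k) (RatFunc k))
    with hAbar
  have hrows : LinearIndependent (RatFunc k) (fun i => Abar i) := by
    rw [Fintype.linearIndependent_iff]
    intro c hc
    apply Fintype.linearIndependent_iff.mp hF' c
    ext mo
    rw [MvPolynomial.coeff_sum]
    simp only [MvPolynomial.coeff_smul, smul_eq_mul]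
    have hco : ∀ i, MvPolynomial.coeff mo (phi σ k (F i))
        = algebraMap (Polynomial k) (RatFunc k) (MvPolynomial.coeff mo (F i)) := by
      intro i; simp [phi, MvPolynomial.coeff_map]
    by_cases hmo : mo ∈ T
    · have := congrFun hc ⟨mo, hmo⟩
      simp only [Finset.sum_apply, Pi.smul_apply, smul_eq_mul, Pi.zero_apply] at this
      simp only [hco]
      simpa [Abar, A, Matrix.map_apply] using this
    · have hz : ∀ i, MvPolynomial.coeff mo (F i) = 0 := by
        intro i
        by_contra h
        exact hmo (Finset.mem_biUnion.mpr ⟨i, Finset.mem_univ i,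
          MvPolynomial.mem_support_iff.mpr h⟩)
      simp [hco, hz]
  have hrank : Abar.rank = s := by
    rw [hrows.rank_matrix (M := Abar), Fintype.card_fin]
  have hspan_cols : Submodule.span (RatFunc k) (Set.range Abar.transpose) = ⊤ := by
    apply Submodule.eq_top_of_finrank_eq
    rw [show Submodule.span (RatFunc k) (Set.range Abar.transpose)
        = Submodule.span (RatFunc k) (Set.range Abar.col) from rfl,
      ← Matrix.rank_eq_finrank_span_cols, hrank,
      Module.finrank_fintype_fun_eq_card, Fintype.card_fin]
  obtain ⟨b, hbsub, hbspan, hbind⟩ := exists_linearIndependent (RatFunc k) (Set.range Abar.transpose)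
  haveI : Fintype b := ((Set.finite_range Abar.transpose).subset hbsub).fintype
  let bas : Module.Basis b (RatFunc k) (Fin s → RatFunc k) :=
    Module.Basis.mk hbind (by rw [Subtype.range_coe, hbspan, hspan_cols])
  have hcard : Fintype.card b = s := by
    rw [← Module.finrank_eq_card_basis bas, Module.finrank_fintype_fun_eq_card,
      Fintype.card_fin]
  let e : Fin s ≃ b := (Fintype.equivFinOfCardEq hcard).symm
  have hchoose : ∀ j : Fin s, ∃ m : T, Abar.transpose m = (e j : Fin s → RatFunc k) := by
    intro j
    obtain ⟨m, hm⟩ := hbsub (e j).2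
    exact ⟨m, hm⟩
  choose mcol hmcol using hchoose
  refine ⟨fun j => (mcol j : σ →₀ ℕ), ?_⟩
  have hBbar : IsUnit (Abar.submatrix id mcol) := by
    rw [← Matrix.mulVec_surjective_iff_isUnit]
    intro y
    refine ⟨fun j => bas.repr y (e j), ?_⟩
    have hy := bas.sum_repr y
    rw [← Equiv.sum_comp e (fun x => bas.repr y x • (bas x : Fin s → RatFunc k))] at hy
    ext i
    rw [Matrix.mulVec, dotProduct]
    have : ∀ j, Abar.submatrix id mcol i j * bas.repr y (e j)
        = bas.repr y (e j) * (bas (e j) : Fin s → RatFunc k) i := by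
      intro j
      rw [mul_comm]
      congr 1
      have := congrFun (hmcol j) i
      rw [Matrix.transpose_apply] at this
      rw [Matrix.submatrix_apply, id_eq, this, Module.Basis.mk_apply]
    rw [Finset.sum_congr rfl fun j _ => this j]
    calc ∑ j, bas.repr y (e j) * (bas (e j) : Fin s → RatFunc k) i
        = (∑ j, bas.repr y (e j) • (bas (e j) : Fin s → RatFunc k)) i := by
          rw [Finset.sum_apply]; simp
      _ = y i := by rw [hy]
  have hdet : IsUnit (Abar.submatrix id mcol).det := (Matrix.isUnit_iff_isUnit_det _).mp hBbar
  have heq : (Abar.submatrix id mcol).det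
      = algebraMap (Polynomial k) (RatFunc k) (A.submatrix id mcol).det := by
    rw [show Abar.submatrix id mcol
      = (algebraMap (Polynomial k) (RatFunc k)).mapMatrix (A.submatrix id mcol) from rfl,
      RingHom.map_det]
  intro h0
  have hsame : (A.submatrix id mcol).det
      = (Matrix.of fun i j => MvPolynomial.coeff ((mcol j : σ →₀ ℕ)) (F i)).det := rfl
  rw [heq, hsame, h0, map_zero] at hdet
  exact hdet.ne_zero rfl

end Aux

/-- Proposition 2.3.  Let `F₁,…,F_s ∈ S[t]` be homogeneous of degree `e` (where
`deg t = 0`).  If there are homogeneous degree `e` elements `G₁,…,G_s ∈ S[t]` such that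
`t^{dᵢ}·Gᵢ` lies in the `k[t]`-span of the `Fⱼ` for each `i`, and the limit forms
`Gᵢ|_{t=0}` are linearly independent over `k`, then the `Fᵢ|_{t=λ}` are linearly
independent over `k` for all but finitely many `λ ∈ k`. -/
theorem linearIndependent_specialization_of_limit_forms
    {σ : Type*} {k : Type*} [Field k] {s : ℕ} {e : ℕ}
    (F G : Fin s → MvPolynomial σ (Polynomial k))
    (hF : ∀ i, (F i).IsHomogeneous e)
    (hG : ∀ i, (G i).IsHomogeneous e)
    (hspan : ∀ i, ∃ d : ℕ,
      (MvPolynomial.C (Polynomial.X : Polynomial k)) ^ d * G i ∈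
        Submodule.span (Polynomial k) (Set.range F))
    (hindep : LinearIndependent k fun i => specialize (0 : k) (G i)) :
    {lam : k | ¬ LinearIndependent k fun i => specialize lam (F i)}.Finite := by
  classical
  have hGbase : LinearIndependent (Polynomial k) G := indep_base G hindep
  have hGK := indep_K G hGbase
  have hFK := indep_F F G hspan hGK
  obtain ⟨m, hm⟩ := exists_good_det F hFK
  set B : Matrix (Fin s) (Fin s) (Polynomial k) :=
    Matrix.of fun i j => MvPolynomial.coeff (m j) (F i) with hB
  apply Set.Finite.subset (Polynomial.finite_setOf_isRoot hm)
  intro lam hlam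
  by_contra hroot
  apply hlam
  rw [Fintype.linearIndependent_iff]
  intro c hc
  have hMdet : (B.map (Polynomial.evalRingHom lam)).det = Polynomial.eval lam B.det := by
    rw [show B.map (Polynomial.evalRingHom lam)
      = (Polynomial.evalRingHom lam).mapMatrix B from rfl, ← RingHom.map_det]
    rfl
  have hunit : IsUnit (B.map (Polynomial.evalRingHom lam)) := by
    rw [Matrix.isUnit_iff_isUnit_det, isUnit_iff_ne_zero, hMdet]
    exact hroot
  have hinj := Matrix.vecMul_injective_iff_isUnit.mpr hunit
  have hvec : Matrix.vecMul c (B.map (Polynomial.evalRingHom lam))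
      = Matrix.vecMul (0 : Fin s → k) (B.map (Polynomial.evalRingHom lam)) := by
    rw [Matrix.zero_vecMul]
    ext j
    rw [Matrix.vecMul, dotProduct]
    have hco : ∀ i, (B.map (Polynomial.evalRingHom lam)) i j
        = MvPolynomial.coeff (m j) (specialize lam (F i)) := by
      intro i
      simp [hB, specialize, Matrix.map_apply, MvPolynomial.coeff_map]
    calc ∑ i, c i * (B.map (Polynomial.evalRingHom lam)) i j
        = ∑ i, c i * MvPolynomial.coeff (m j) (specialize lam (F i)) := by
          exact Finset.sum_congr rfl fun i _ => by rw [hco i]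
      _ = MvPolynomial.coeff (m j) (∑ i, c i • specialize lam (F i)) := by
          rw [MvPolynomial.coeff_sum]
          exact Finset.sum_congr rfl fun i _ => by rw [MvPolynomial.coeff_smul]; rfl
      _ = 0 := by rw [hc]; rfl
  have := hinj hvec
  intro i
  exact congrFun this i
end

section
/- Let R₁ ↠ R₂ = R₁/P be a surjection of Noetherian local k-algebras with residue field k, where P is an ideal, such that the induced map on cotangent spaces m₁/m₁² → m₂/m₂² is an isomorphism. Suppose that for every n ≥ 3, the canonical surjection R₂ → R₂/m₂^{n-1} lifts along the surjection R₂/m₂^n → R₂/m₂^{n-1} to a k-algebra map R₂ → R₂/m₂^n. Then P = 0, i.e. R₁ → R₂ is an isomorphism. (This is the key step of Lemma A.2: a quotient by an ideal contained in the square of the maximal ideal which admits all liftings along small extensions of the indicated form must be trivial.) -/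
/-- The key step of Lemma A.2.  Let `f : R₁ ↠ R₂` be a surjection of Noetherian local
`k`-algebras with residue field `k`, whose kernel `P` is contained in `m₁²` (equivalently,
since `f` is surjective: `f` induces an isomorphism on cotangent spaces
`m₁/m₁² → m₂/m₂²`).  Suppose that for every `n ≥ 3` with `ker f ⊆ m₁^{n-1}`, the induced
map `R₂ → R₁/m₁^{n-1}` lifts along the small extension `R₁/m₁^n → R₁/m₁^{n-1}` to a
`k`-algebra map `g : R₂ → R₁/m₁^n` (the lifting condition is expressed, using
surjectivity of `f`, by `(canonical) ∘ g ∘ f = canonical : R₁ → R₁/m₁^{n-1}`).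
Then `P = 0`, i.e. `f` is an isomorphism. -/
theorem ker_eq_bot_of_liftings
    {k R₁ R₂ : Type*} [Field k] [CommRing R₁] [CommRing R₂]
    [Algebra k R₁] [Algebra k R₂]
    [IsNoetherianRing R₁] [IsNoetherianRing R₂]
    [IsLocalRing R₁] [IsLocalRing R₂]
    -- residue fields are `k`:
    (hres₁ : Function.Bijective
      ((IsLocalRing.residue R₁).comp (algebraMap k R₁)))
    (hres₂ : Function.Bijective
      ((IsLocalRing.residue R₂).comp (algebraMap k R₂)))
    (f : R₁ →ₐ[k] R₂) (hf : Function.Surjective f)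
    -- the kernel `P` is contained in `m₁²`:
    (hP : RingHom.ker f.toRingHom ≤ (IsLocalRing.maximalIdeal R₁) ^ 2)
    -- lifting hypothesis:
    (hlift : ∀ n : ℕ, 3 ≤ n →
      RingHom.ker f.toRingHom ≤ (IsLocalRing.maximalIdeal R₁) ^ (n - 1) →
      ∃ g : R₂ →ₐ[k] R₁ ⧸ (IsLocalRing.maximalIdeal R₁) ^ n,
        ((Ideal.Quotient.factor (S := (IsLocalRing.maximalIdeal R₁) ^ n)
              (T := (IsLocalRing.maximalIdeal R₁) ^ (n - 1))
              (Ideal.pow_le_pow_right (by omega))).comp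
            (g.toRingHom.comp f.toRingHom)) =
          Ideal.Quotient.mk ((IsLocalRing.maximalIdeal R₁) ^ (n - 1))) :
    RingHom.ker f.toRingHom = ⊥ := by
  set m := IsLocalRing.maximalIdeal R₁ with hm
  -- By induction, `ker f ≤ m ^ (n + 2)` for every `n`.
  have key : ∀ n : ℕ, RingHom.ker f.toRingHom ≤ m ^ (n + 2) := by
    intro n
    induction n with
    | zero => exact hP
    | succ n ih =>
      obtain ⟨g, hg⟩ := hlift (n + 3) (by omega) ih
      set Q : R₁ →+* R₁ ⧸ m ^ (n + 3) := Ideal.Quotient.mk (m ^ (n + 3)) with hQ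
      set h : R₁ →+* R₁ ⧸ m ^ (n + 3) := g.toRingHom.comp f.toRingHom with hh
      set π : (R₁ ⧸ m ^ (n + 3)) →+* R₁ ⧸ m ^ (n + 2) :=
        Ideal.Quotient.factor (S := m ^ (n + 3)) (T := m ^ (n + 2))
          (Ideal.pow_le_pow_right (by omega)) with hπ
      have hfac : ∀ x : R₁, π (h x) = Ideal.Quotient.mk (m ^ (n + 2)) x := fun x =>
        RingHom.congr_fun hg x
      have hQfac : ∀ x : R₁, π (Q x) = Ideal.Quotient.mk (m ^ (n + 2)) x := fun x =>
        Ideal.Quotient.factor_mk _ x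
      -- the "derivation" `h - Q` lands in the image of `m ^ (n+2)`:
      have hdelta : ∀ x : R₁, h x - Q x ∈ Ideal.map Q (m ^ (n + 2)) := by
        intro x
        obtain ⟨y, hy⟩ := Ideal.Quotient.mk_surjective (I := m ^ (n + 3)) (h x - Q x)
        have hy0 : Ideal.Quotient.mk (m ^ (n + 2)) y = 0 := by
          have : π (Q y) = π (h x) - π (Q x) := by rw [hy, map_sub]
          rw [hQfac, hfac, hQfac] at this
          simpa using this
        rw [← hy]
        exact Ideal.mem_map_of_mem Q (Ideal.Quotient.eq_zero_iff_mem.mp hy0)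
      have hbot : Ideal.map Q (m ^ (n + 3)) = ⊥ := Ideal.map_quotient_self _
      have hmul1 : ∀ a b : R₁ ⧸ m ^ (n + 3), a ∈ Ideal.map Q m →
          b ∈ Ideal.map Q (m ^ (n + 2)) → a * b = 0 := by
        intro a b ha hb
        have : a * b ∈ Ideal.map Q m * Ideal.map Q (m ^ (n + 2)) := Ideal.mul_mem_mul ha hb
        rw [← Ideal.map_mul, ← pow_succ'] at this
        rw [hbot] at this
        simpa using this
      have hmul2 : ∀ a b : R₁ ⧸ m ^ (n + 3), a ∈ Ideal.map Q (m ^ (n + 2)) →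
          b ∈ Ideal.map Q (m ^ (n + 2)) → a * b = 0 := by
        intro a b ha hb
        have : a * b ∈ Ideal.map Q (m ^ (n + 2)) * Ideal.map Q (m ^ (n + 2)) :=
          Ideal.mul_mem_mul ha hb
        rw [← Ideal.map_mul, ← pow_add] at this
        have hle : Ideal.map Q (m ^ (n + 2 + (n + 2))) ≤ Ideal.map Q (m ^ (n + 3)) :=
          Ideal.map_mono (Ideal.pow_le_pow_right (by omega))
        have := hle this
        rw [hbot] at this
        simpa using this
      -- `h` and `Q` agree on `m * m`:
      have hkey : ∀ x ∈ m * m, h x = Q x := by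
        intro x hx
        refine Submodule.mul_induction_on hx ?_ ?_
        · intro a ha b hb
          have hda := hdelta a
          have hdb := hdelta b
          have hQa : Q a ∈ Ideal.map Q m := Ideal.mem_map_of_mem Q ha
          have hQb : Q b ∈ Ideal.map Q m := Ideal.mem_map_of_mem Q hb
          have e1 : Q a * (h b - Q b) = 0 := hmul1 _ _ hQa hdb
          have e2 : (h a - Q a) * Q b = 0 := by
            rw [mul_comm]; exact hmul1 _ _ hQb hda
          have e3 : (h a - Q a) * (h b - Q b) = 0 := hmul2 _ _ hda hdb
          have expand : h (a * b) - Q (a * b) =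
              Q a * (h b - Q b) + (h a - Q a) * Q b + (h a - Q a) * (h b - Q b) := by
            rw [map_mul, map_mul]; ring
          have : h (a * b) - Q (a * b) = 0 := by rw [expand, e1, e2, e3]; ring
          exact sub_eq_zero.mp this
        · intro x y hx' hy'
          rw [map_add, map_add, hx', hy']
      -- conclude the inductive step:
      intro x hx
      have hx2 : x ∈ m * m := by
        have := hP hx
        rwa [pow_two] at this
      have hfx : f x = 0 := hx
      have : h x = 0 := by
        rw [hh]
        simp [RingHom.comp_apply, hfx]
      rw [hkey x hx2] at this
      exact Ideal.Quotient.eq_zero_iff_mem.mp this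
  -- conclude via Krull intersection:
  have hbot : (⨅ i : ℕ, m ^ i) = ⊥ :=
    Ideal.iInf_pow_eq_bot_of_isLocalRing m (IsLocalRing.maximalIdeal.isMaximal R₁).ne_top
  rw [eq_bot_iff, ← hbot]
  refine le_iInf fun i => ?_
  calc RingHom.ker f.toRingHom ≤ m ^ (i + 2) := key i
    _ ≤ m ^ i := Ideal.pow_le_pow_right (by omega)
end

section
/- Let f be the Hilbert function of S/Ann(F) for a nonzero ternary form F of even degree d = 2e − 2, over a field of characteristic 0 or > d. If for every a ≤ e − 1 one has f(a+1) = a + 2 + g(a), where g is the Hilbert function of S/Ann(α₀ ∘ F) (this holds when Ann(F)_e ⊆ (α₀)), then f(e−2) = f(e−1) + 1, contradicting unimodality of f; hence Ann(F)_e is not contained in (α₀). -/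
open MvPolynomial

variable {k : Type*} [Field k]

open scoped Classical in
/-- The contraction (apolarity) action of `S = k[α₀,α₁,α₂]` on the dual polynomial ring. -/
noncomputable def contract (p f : MvPolynomial (Fin 3) k) : MvPolynomial (Fin 3) k :=
  (AddMonoidAlgebra.coeff p).sum fun a c => (AddMonoidAlgebra.coeff f).sum fun b d => if a ≤ b then monomial (b - a) (c * d) else 0

/-- The degree-`a` graded piece `Ann(F)_a` of the apolar ideal of `F`. -/
noncomputable def annPiece (F : MvPolynomial (Fin 3) k) (a : ℕ) :
    Submodule k (MvPolynomial (Fin 3) k) :=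
  Submodule.span k
    {σ | σ ∈ homogeneousSubmodule (Fin 3) k a ∧ contract σ F = 0}

/-- The Hilbert function of `S/Ann(F)`. -/
noncomputable def hilbAnn (F : MvPolynomial (Fin 3) k) (a : ℕ) : ℕ :=
  Module.finrank k ↥(homogeneousSubmodule (Fin 3) k a) -
    Module.finrank k ↥(annPiece F a)

namespace ApolarHelper

set_option maxHeartbeats 1000000
set_option synthInstance.maxHeartbeats 400000

/-! ### Basic coefficient lemmas for `contract` -/

/-- Master coefficient formula for `contract`. -/
lemma coeff_contract (p f : MvPolynomial (Fin 3) k) (c : Fin 3 →₀ ℕ) :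
    coeff c (contract p f) = ∑ a ∈ p.support, coeff a p * coeff (c + a) f := by
  classical
  unfold contract
  rw [Finsupp.sum, MvPolynomial.coeff_sum]
  refine Finset.sum_congr rfl fun a ha => ?_
  rw [Finsupp.sum, MvPolynomial.coeff_sum]
  rw [Finset.sum_eq_single (c + a)]
  · simp only [le_add_iff_nonneg_left, zero_le, if_true, add_tsub_cancel_right,
      MvPolynomial.coeff_monomial, if_pos rfl]
    rfl
  · intro b hb hne
    split_ifs with hab
    · rw [MvPolynomial.coeff_monomial, if_neg]
      intro h
      apply hne
      have : b - a + a = b := tsub_add_cancel_of_le hab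
      rw [← this, h]
    · simp
  · intro h
    simp only [le_add_iff_nonneg_left, zero_le, if_true, add_tsub_cancel_right,
      MvPolynomial.coeff_monomial, if_pos rfl]
    exact mul_eq_zero_of_right _ (MvPolynomial.notMem_support_iff.mp h)

lemma coeff_contract_superset (p f : MvPolynomial (Fin 3) k) (c : Fin 3 →₀ ℕ)
    {s : Finset (Fin 3 →₀ ℕ)} (hs : p.support ⊆ s) :
    coeff c (contract p f) = ∑ a ∈ s, coeff a p * coeff (c + a) f := by
  rw [coeff_contract]
  exact Finset.sum_subset hs fun a _ ha => by
    rw [MvPolynomial.notMem_support_iff.mp ha, zero_mul]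

lemma contract_add_left (p q f : MvPolynomial (Fin 3) k) :
    contract (p + q) f = contract p f + contract q f := by
  ext c
  rw [MvPolynomial.coeff_add,
    coeff_contract_superset (p + q) f c (MvPolynomial.support_add),
    coeff_contract_superset p f c (Finset.subset_union_left),
    coeff_contract_superset q f c (Finset.subset_union_right), ← Finset.sum_add_distrib]
  refine Finset.sum_congr rfl fun a _ => ?_
  rw [MvPolynomial.coeff_add, add_mul]

lemma contract_smul_left (r : k) (p f : MvPolynomial (Fin 3) k) :
    contract (r • p) f = r • contract p f := by
  ext c
  rw [MvPolynomial.coeff_smul,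
    coeff_contract_superset (r • p) f c (Finsupp.support_smul),
    coeff_contract, smul_eq_mul, Finset.mul_sum]
  refine Finset.sum_congr rfl fun a _ => ?_
  rw [MvPolynomial.coeff_smul, smul_eq_mul, mul_assoc]

lemma contract_add_right (p f g : MvPolynomial (Fin 3) k) :
    contract p (f + g) = contract p f + contract p g := by
  ext c
  rw [MvPolynomial.coeff_add, coeff_contract, coeff_contract, coeff_contract,
    ← Finset.sum_add_distrib]
  refine Finset.sum_congr rfl fun a _ => ?_
  rw [MvPolynomial.coeff_add, mul_add]

lemma contract_smul_right (r : k) (p f : MvPolynomial (Fin 3) k) :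
    contract p (r • f) = r • contract p f := by
  ext c
  rw [MvPolynomial.coeff_smul, coeff_contract, coeff_contract, smul_eq_mul, Finset.mul_sum]
  refine Finset.sum_congr rfl fun a _ => ?_
  rw [MvPolynomial.coeff_smul, smul_eq_mul]; ring

lemma contract_zero_left (f : MvPolynomial (Fin 3) k) : contract 0 f = 0 := by
  ext c; rw [coeff_contract]; simp

lemma contract_zero_right (p : MvPolynomial (Fin 3) k) : contract p 0 = 0 := by
  ext c; rw [coeff_contract]; simp

lemma contract_neg_left (p f : MvPolynomial (Fin 3) k) :
    contract (-p) f = -contract p f := by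
  have h := contract_smul_left (-1 : k) p f
  simpa [neg_one_smul] using h

lemma contract_sub_left (p q f : MvPolynomial (Fin 3) k) :
    contract (p - q) f = contract p f - contract q f := by
  rw [sub_eq_add_neg, contract_add_left, contract_neg_left, sub_eq_add_neg]

lemma contract_monomial_left (a : Fin 3 →₀ ℕ) (r : k) (f : MvPolynomial (Fin 3) k)
    (c : Fin 3 →₀ ℕ) :
    coeff c (contract (monomial a r) f) = r * coeff (c + a) f := by
  classical
  by_cases hr : r = 0
  · subst hr; simp [(monomial a).map_zero, contract_zero_left]
  · rw [coeff_contract_superset _ f c (s := {a}) (by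
      rw [MvPolynomial.support_monomial, if_neg hr])]
    simp [MvPolynomial.coeff_monomial]

/-- Multiplicativity: `contract` is a module action. -/
lemma contract_mul (p q f : MvPolynomial (Fin 3) k) :
    contract (p * q) f = contract p (contract q f) := by
  induction p using MvPolynomial.induction_on' with
  | add p1 p2 hp1 hp2 => rw [add_mul, contract_add_left, hp1, hp2, contract_add_left]
  | monomial a r =>
    induction q using MvPolynomial.induction_on' with
    | add q1 q2 hq1 hq2 =>
      rw [mul_add, contract_add_left, hq1, hq2, contract_add_left q1 q2 f, contract_add_right]
    | monomial a' r' =>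
      ext c
      rw [MvPolynomial.monomial_mul, contract_monomial_left, contract_monomial_left,
        contract_monomial_left, add_assoc, mul_assoc]

lemma contract_C (r : k) (f : MvPolynomial (Fin 3) k) : contract (C r) f = r • f := by
  ext c
  rw [show (C r : MvPolynomial (Fin 3) k) = monomial 0 r from rfl, contract_monomial_left,
    MvPolynomial.coeff_smul, add_zero, smul_eq_mul]

/-- Constant coefficient of a contraction as a dot product. -/
lemma coeff_zero_contract (p q : MvPolynomial (Fin 3) k) :
    coeff 0 (contract p q) = ∑ a ∈ p.support, coeff a p * coeff a q := by
  rw [coeff_contract]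
  refine Finset.sum_congr rfl fun a _ => ?_
  rw [zero_add]

lemma coeff_zero_contract_superset (p q : MvPolynomial (Fin 3) k)
    {s : Finset (Fin 3 →₀ ℕ)} (hs : p.support ⊆ s) :
    coeff 0 (contract p q) = ∑ a ∈ s, coeff a p * coeff a q := by
  rw [coeff_zero_contract]
  exact Finset.sum_subset hs fun a _ ha => by
    rw [MvPolynomial.notMem_support_iff.mp ha, zero_mul]

/-- The constant coefficient of `contract p q` is symmetric in `p` and `q`. -/
lemma coeff_zero_contract_comm (p q : MvPolynomial (Fin 3) k) :
    coeff 0 (contract p q) = coeff 0 (contract q p) := by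
  rw [coeff_zero_contract_superset p q (Finset.subset_union_left (s₂ := q.support)),
    coeff_zero_contract_superset q p (Finset.subset_union_right (s₁ := p.support))]
  refine Finset.sum_congr rfl fun a _ => ?_
  exact mul_comm _ _

lemma coeff_zero_contract_monomial (b : Fin 3 →₀ ℕ) (q : MvPolynomial (Fin 3) k) :
    coeff 0 (contract (monomial b 1) q) = coeff b q := by
  rw [contract_monomial_left, one_mul, zero_add]

/-! ### Degree bookkeeping -/

lemma deg3 (x : Fin 3 →₀ ℕ) : Finsupp.degree x = x 0 + x 1 + x 2 := by
  rw [Finsupp.degree_apply, Finset.sum_subset (Finset.subset_univ x.support)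
    (fun i _ h => Finsupp.notMem_support_iff.mp h), Fin.sum_univ_three]

lemma isHomogeneous_def {p : MvPolynomial (Fin 3) k} {n : ℕ} :
    p.IsHomogeneous n ↔ ∀ d, coeff d p ≠ 0 → Finsupp.degree d = n := by
  simp only [MvPolynomial.IsHomogeneous, MvPolynomial.IsWeightedHomogeneous,
    Finsupp.degree_eq_weight_one, Pi.one_def]

lemma degree_single3 (i : Fin 3) (m : ℕ) : Finsupp.degree (Finsupp.single i m) = m := by
  fin_cases i <;> simp [deg3, Finsupp.single_apply]

lemma degree_add3 (x y : Fin 3 →₀ ℕ) :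
    Finsupp.degree (x + y) = Finsupp.degree x + Finsupp.degree y := by
  simp only [deg3, Finsupp.add_apply]; omega

/-- Homogeneity of contractions. -/
lemma contract_isHomogeneous {p f : MvPolynomial (Fin 3) k} {m n r : ℕ}
    (hp : p.IsHomogeneous m) (hf : f.IsHomogeneous n) (hr : r + m = n) :
    (contract p f).IsHomogeneous r := by
  rw [isHomogeneous_def]
  intro d hd
  rw [coeff_contract] at hd
  obtain ⟨a, ha, hne⟩ := Finset.exists_ne_zero_of_sum_ne_zero hd
  have h1 : coeff a p ≠ 0 := fun h => hne (by rw [h, zero_mul])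
  have h2 : coeff (d + a) f ≠ 0 := fun h => hne (by rw [h, mul_zero])
  have e1 := isHomogeneous_def.mp hp a h1
  have e2 := isHomogeneous_def.mp hf (d + a) h2
  rw [degree_add3, e1] at e2
  omega


/-! ### The binary (no `x₀`) part -/

/-- The part of a polynomial not involving the variable `X 0`. -/
noncomputable def binPart (p : MvPolynomial (Fin 3) k) : MvPolynomial (Fin 3) k :=
  (AddMonoidAlgebra.coeff p).sum fun b c => if b 0 = 0 then monomial b c else 0

lemma coeff_binPart (p : MvPolynomial (Fin 3) k) (b : Fin 3 →₀ ℕ) :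
    coeff b (binPart p) = if b 0 = 0 then coeff b p else 0 := by
  classical
  unfold binPart
  rw [Finsupp.sum, MvPolynomial.coeff_sum]
  rw [Finset.sum_eq_single b]
  · split_ifs with h
    · rw [MvPolynomial.coeff_monomial, if_pos rfl]; rfl
    · rfl
  · intro b' _ hne
    split_ifs with h
    · rw [MvPolynomial.coeff_monomial, if_neg hne]
    · exact MvPolynomial.coeff_zero b
  · intro h
    split_ifs with h0
    · rw [MvPolynomial.coeff_monomial, if_pos rfl]
      exact MvPolynomial.notMem_support_iff.mp h
    · exact MvPolynomial.coeff_zero b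

lemma binPart_add (p q : MvPolynomial (Fin 3) k) :
    binPart (p + q) = binPart p + binPart q := by
  ext b
  simp only [coeff_binPart, MvPolynomial.coeff_add]
  split_ifs <;> simp

lemma binPart_smul (r : k) (p : MvPolynomial (Fin 3) k) :
    binPart (r • p) = r • binPart p := by
  ext b
  simp only [coeff_binPart, MvPolynomial.coeff_smul]
  split_ifs <;> simp

/-- `binPart` as a linear map. -/
noncomputable def binPartL : MvPolynomial (Fin 3) k →ₗ[k] MvPolynomial (Fin 3) k where
  toFun := binPart
  map_add' := binPart_add
  map_smul' := binPart_smul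

/-- The submodule of polynomials not involving `X 0`. -/
def noX0 : Submodule k (MvPolynomial (Fin 3) k) where
  carrier := {p | ∀ b, coeff b p ≠ 0 → b 0 = 0}
  zero_mem' := fun b hb => absurd (MvPolynomial.coeff_zero b) hb
  add_mem' := fun {p q} hp hq b hb => by
    rw [MvPolynomial.coeff_add] at hb
    by_cases h : coeff b p = 0
    · exact hq b (by rw [h, zero_add] at hb; exact hb)
    · exact hp b h
  smul_mem' := fun r p hp b hb => by
    rw [MvPolynomial.coeff_smul] at hb
    exact hp b fun h => hb (by rw [h, smul_zero])

lemma binPart_mem_noX0 (p : MvPolynomial (Fin 3) k) : binPart p ∈ (noX0 : Submodule k _) := by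
  intro b hb
  rw [coeff_binPart] at hb
  by_contra h
  rw [if_neg h] at hb
  exact hb rfl

lemma binPart_eq_self {p : MvPolynomial (Fin 3) k} (hp : p ∈ (noX0 : Submodule k _)) :
    binPart p = p := by
  ext b
  rw [coeff_binPart]
  split_ifs with h
  · rfl
  · by_contra hne
    exact h (hp b fun hh => hne hh.symm)

lemma binPart_isHomogeneous {p : MvPolynomial (Fin 3) k} {n : ℕ} (hp : p.IsHomogeneous n) :
    (binPart p).IsHomogeneous n := by
  rw [isHomogeneous_def] at hp ⊢
  intro d hd
  rw [coeff_binPart] at hd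
  split_ifs at hd with h
  · exact hp d hd
  · exact absurd rfl hd

lemma coeff_sub_binPart {p : MvPolynomial (Fin 3) k} {b : Fin 3 →₀ ℕ}
    (hb : coeff b (p - binPart p) ≠ 0) : b 0 ≠ 0 := by
  intro h0
  rw [MvPolynomial.coeff_sub, coeff_binPart, if_pos h0, sub_self] at hb
  exact hb rfl

lemma contract_eq_zero_of_x0 {z q : MvPolynomial (Fin 3) k}
    (hz : ∀ b, coeff b z ≠ 0 → b 0 ≠ 0) (hq : q ∈ (noX0 : Submodule k _)) :
    contract z q = 0 := by
  ext c
  rw [coeff_contract, MvPolynomial.coeff_zero]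
  refine Finset.sum_eq_zero fun a ha => ?_
  have h1 : a 0 ≠ 0 := hz a (MvPolynomial.mem_support_iff.mp ha)
  have h2 : coeff (c + a) q = 0 := by
    by_contra h
    have := hq (c + a) h
    rw [Finsupp.add_apply] at this
    omega
  rw [h2, mul_zero]

lemma contract_binPart_left {p q : MvPolynomial (Fin 3) k}
    (hq : q ∈ (noX0 : Submodule k _)) :
    contract p q = contract (binPart p) q := by
  have hsplit : p = binPart p + (p - binPart p) := by ring
  conv_lhs => rw [hsplit]
  rw [contract_add_left, contract_eq_zero_of_x0 (fun b => coeff_sub_binPart) hq, add_zero]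

lemma contract_X0_coeff (f : MvPolynomial (Fin 3) k) (c : Fin 3 →₀ ℕ) :
    coeff c (contract (X 0) f) = coeff (c + Finsupp.single 0 1) f := by
  rw [show (X 0 : MvPolynomial (Fin 3) k) = monomial (Finsupp.single 0 1) 1 from rfl,
    contract_monomial_left, one_mul]

lemma mem_noX0_of_contractX0 {Q : MvPolynomial (Fin 3) k}
    (h : contract (X 0) Q = 0) : Q ∈ (noX0 : Submodule k _) := by
  intro b hb
  by_contra h0
  have hle : Finsupp.single 0 1 ≤ b := by
    rw [Finsupp.single_le_iff]
    omega
  have : b = (b - Finsupp.single 0 1) + Finsupp.single 0 1 := (tsub_add_cancel_of_le hle).symm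
  rw [this, ← contract_X0_coeff, h, MvPolynomial.coeff_zero] at hb
  exact hb rfl

/-- Monomial division: if every monomial of `p` is divisible by `x^μ` then `p = q * x^μ`. -/
lemma div_monomial (p : MvPolynomial (Fin 3) k) (μ : Fin 3 →₀ ℕ)
    (h : ∀ b, coeff b p ≠ 0 → μ ≤ b) :
    ∃ q : MvPolynomial (Fin 3) k, p = q * monomial μ 1 ∧
      ∀ b, coeff b q = coeff (b + μ) p := by
  classical
  refine ⟨(AddMonoidAlgebra.coeff p).sum fun b c => monomial (b - μ) c, ?_, ?_⟩
  case refine_2 =>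
    intro b'
    rw [Finsupp.sum, MvPolynomial.coeff_sum]
    rw [Finset.sum_eq_single (b' + μ)]
    · rw [add_tsub_cancel_right, MvPolynomial.coeff_monomial, if_pos rfl]
      rfl
    · intro b hb hne
      rw [MvPolynomial.coeff_monomial, if_neg]
      intro he
      apply hne
      have hle : μ ≤ b := h b (MvPolynomial.mem_support_iff.mp hb)
      rw [← he, tsub_add_cancel_of_le hle]
    · intro hnot
      rw [add_tsub_cancel_right, MvPolynomial.coeff_monomial, if_pos rfl]
      exact MvPolynomial.notMem_support_iff.mp hnot
  case refine_1 =>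
    have hq : ∀ b', coeff b' ((AddMonoidAlgebra.coeff p).sum fun b c => monomial (b - μ) c) = coeff (b' + μ) p := by
      intro b'
      rw [Finsupp.sum, MvPolynomial.coeff_sum]
      rw [Finset.sum_eq_single (b' + μ)]
      · rw [add_tsub_cancel_right, MvPolynomial.coeff_monomial, if_pos rfl]
        rfl
      · intro b hb hne
        rw [MvPolynomial.coeff_monomial, if_neg]
        intro he
        apply hne
        have hle : μ ≤ b := h b (MvPolynomial.mem_support_iff.mp hb)
        rw [← he, tsub_add_cancel_of_le hle]
      · intro hnot
        rw [add_tsub_cancel_right, MvPolynomial.coeff_monomial, if_pos rfl]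
        exact MvPolynomial.notMem_support_iff.mp hnot
    ext b
    rw [MvPolynomial.coeff_mul_monomial']
    split_ifs with hle
    · rw [hq, mul_one, tsub_add_cancel_of_le hle]
    · rcases eq_or_ne (coeff b p) 0 with hb0 | hb0
      · rw [hb0]
      · exact absurd (h b hb0) hle


/-! ### Graded pieces as finite-dimensional spaces -/

lemma hom_cast {p : MvPolynomial (Fin 3) k} {n n' : ℕ} (h : p.IsHomogeneous n) (e : n = n') :
    p.IsHomogeneous n' := e ▸ h

lemma fin3_decomp (b : Fin 3 →₀ ℕ) :
    b = Finsupp.single 0 (b 0) + Finsupp.single 1 (b 1) + Finsupp.single 2 (b 2) := by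
  ext i
  fin_cases i <;> simp [Finsupp.single_apply]

instance homFD (n : ℕ) : FiniteDimensional k ↥(homogeneousSubmodule (Fin 3) k n) := by
  classical
  set s : Finset (MvPolynomial (Fin 3) k) :=
    ((Finset.range (n+1)) ×ˢ (Finset.range (n+1)) ×ˢ (Finset.range (n+1))).image
      (fun t => monomial (Finsupp.single 0 t.1 + Finsupp.single 1 t.2.1 +
        Finsupp.single 2 t.2.2) (1:k)) with hs
  have hle : homogeneousSubmodule (Fin 3) k n ≤ Submodule.span k (↑s : Set _) := by
    intro p hp
    rw [MvPolynomial.mem_homogeneousSubmodule] at hp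
    rw [← MvPolynomial.support_sum_monomial_coeff p]
    refine Submodule.sum_mem _ fun b hb => ?_
    have hcoeff : coeff b p ≠ 0 := MvPolynomial.mem_support_iff.mp hb
    have hdeg : Finsupp.degree b = n := isHomogeneous_def.mp hp b hcoeff
    rw [deg3] at hdeg
    have : monomial b (coeff b p) = (coeff b p) • monomial b (1:k) := by
      rw [MvPolynomial.smul_monomial, smul_eq_mul, mul_one]
    rw [this]
    refine Submodule.smul_mem _ _ (Submodule.subset_span ?_)
    rw [hs]
    simp only [Finset.coe_image, Set.mem_image, Finset.mem_coe, Finset.mem_product,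
      Finset.mem_range]
    exact ⟨(b 0, b 1, b 2), ⟨show b 0 < n+1 by omega, show b 1 < n+1 by omega,
      show b 2 < n+1 by omega⟩, by rw [← fin3_decomp]⟩
  exact Submodule.finiteDimensional_of_le hle

variable (k) in
/-- The space of "binary" homogeneous forms of degree `n` (no `x₀`). -/
noncomputable def Bsub (n : ℕ) : Submodule k (MvPolynomial (Fin 3) k) :=
  homogeneousSubmodule (Fin 3) k n ⊓ noX0

lemma Bsub_le_H (n : ℕ) : Bsub k n ≤ homogeneousSubmodule (Fin 3) k n := inf_le_left

instance BsubFD (n : ℕ) : FiniteDimensional k ↥(Bsub k n) :=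
  Submodule.finiteDimensional_of_le (Bsub_le_H n)

lemma finrank_le_of_le {V W : Submodule k (MvPolynomial (Fin 3) k)} (h : V ≤ W)
    [FiniteDimensional k ↥W] : Module.finrank k ↥V ≤ Module.finrank k ↥W := by
  have e : Module.finrank k ↥V = Module.finrank k ↥(Submodule.comap W.subtype V) :=
    (Submodule.comapSubtypeEquivOfLe h).symm.finrank_eq
  rw [e]
  exact Submodule.finrank_le _

lemma mem_Bsub {n : ℕ} {p : MvPolynomial (Fin 3) k} :
    p ∈ Bsub k n ↔ p.IsHomogeneous n ∧ ∀ b, coeff b p ≠ 0 → b 0 = 0 := by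
  rw [Bsub, Submodule.mem_inf, MvPolynomial.mem_homogeneousSubmodule]
  rfl

/-- index monomial for the binary basis -/
noncomputable def bidx (n i : ℕ) : Fin 3 →₀ ℕ := Finsupp.single 1 i + Finsupp.single 2 (n - i)

lemma bidx_mem {n i : ℕ} (hi : i ≤ n) : monomial (bidx n i) (1:k) ∈ Bsub k n := by
  rw [mem_Bsub]
  constructor
  · refine isHomogeneous_monomial _ ?_
    rw [bidx, degree_add3, degree_single3, degree_single3]
    omega
  · intro b hb
    rw [MvPolynomial.coeff_monomial] at hb
    split_ifs at hb with h
    · rw [← h, bidx, Finsupp.add_apply, Finsupp.single_apply, Finsupp.single_apply]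
      simp
    · exact absurd rfl hb

lemma bidx_apply1 (n i : ℕ) : (bidx n i) 1 = i := by
  rw [bidx, Finsupp.add_apply, Finsupp.single_apply, Finsupp.single_apply]; simp

lemma bidx_inj {n : ℕ} {i j : ℕ} (h : bidx n i = bidx n j) : i = j := by
  have := congrArg (fun f => f 1) h
  simpa [bidx_apply1] using this

/-- A binary form is determined by its `bidx`-coefficients. -/
lemma bin_eq_zero {n : ℕ} {p : MvPolynomial (Fin 3) k} (hp : p ∈ Bsub k n)
    (h : ∀ i : ℕ, i ≤ n → coeff (bidx n i) p = 0) : p = 0 := by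
  rw [mem_Bsub] at hp
  ext b
  rw [MvPolynomial.coeff_zero]
  by_contra hb
  have h0 : b 0 = 0 := hp.2 b hb
  have hdeg : Finsupp.degree b = n := isHomogeneous_def.mp hp.1 b hb
  rw [deg3] at hdeg
  have hbeq : b = bidx n (b 1) := by
    rw [bidx]
    ext i
    fin_cases i <;> simp [Finsupp.single_apply] <;> omega
  rw [hbeq] at hb
  exact hb (h (b 1) (by omega))

lemma finrank_Bsub (n : ℕ) : Module.finrank k ↥(Bsub k n) = n + 1 := by
  classical
  let L : ↥(Bsub k n) →ₗ[k] (Fin (n+1) → k) :=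
    { toFun := fun P i => coeff (bidx n (i : ℕ)) (P : MvPolynomial (Fin 3) k)
      map_add' := fun x y => by funext i; exact MvPolynomial.coeff_add _ _ _
      map_smul' := fun r x => by funext i; exact MvPolynomial.coeff_smul _ _ _ }
  have hinj : Function.Injective L := by
    intro x y hxy
    ext1
    have hsub : ((x : MvPolynomial (Fin 3) k) - y) ∈ Bsub k n :=
      Submodule.sub_mem _ x.2 y.2
    have : (x : MvPolynomial (Fin 3) k) - y = 0 := by
      refine bin_eq_zero hsub fun i hi => ?_
      rw [MvPolynomial.coeff_sub]
      have := congrFun hxy ⟨i, by omega⟩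
      simpa [L] using sub_eq_zero_of_eq this
    exact sub_eq_zero.mp this
  have hsurj : Function.Surjective L := by
    intro v
    have hmem : (∑ i : Fin (n+1), monomial (bidx n (i:ℕ)) (v i)) ∈ Bsub k n := by
      refine Submodule.sum_mem _ fun i _ => ?_
      have : monomial (bidx n (i:ℕ)) (v i) = (v i) • monomial (bidx n (i:ℕ)) (1:k) := by
        rw [MvPolynomial.smul_monomial, smul_eq_mul, mul_one]
      rw [this]
      exact Submodule.smul_mem _ _ (bidx_mem (by omega))
    refine ⟨⟨_, hmem⟩, ?_⟩
    funext j
    show coeff (bidx n (j:ℕ)) (∑ i : Fin (n+1), monomial (bidx n (i:ℕ)) (v i)) = v j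
    rw [MvPolynomial.coeff_sum]
    rw [Finset.sum_eq_single j]
    · rw [MvPolynomial.coeff_monomial, if_pos rfl]
    · intro i _ hne
      rw [MvPolynomial.coeff_monomial, if_neg]
      intro h
      exact hne (Fin.ext (bidx_inj h))
    · intro h
      exact absurd (Finset.mem_univ j) h
  have := LinearEquiv.finrank_eq (LinearEquiv.ofBijective L ⟨hinj, hsurj⟩)
  rw [this, Module.finrank_fin_fun]


/-! ### The contraction pairing and orthogonality -/

variable (k) in
/-- The contraction pairing restricted to a subspace. -/
noncomputable def pForm (V : Submodule k (MvPolynomial (Fin 3) k)) :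
    LinearMap.BilinForm k ↥V :=
  LinearMap.mk₂ k (fun x y => coeff 0 (contract (x : MvPolynomial (Fin 3) k) (y : _)))
    (fun x x' y => by
      simp only [Submodule.coe_add, contract_add_left, MvPolynomial.coeff_add])
    (fun r x y => by
      simp only [SetLike.val_smul, contract_smul_left, MvPolynomial.coeff_smul, smul_eq_mul])
    (fun x y y' => by
      simp only [Submodule.coe_add, contract_add_right, MvPolynomial.coeff_add])
    (fun r x y => by
      simp only [SetLike.val_smul, contract_smul_right, MvPolynomial.coeff_smul, smul_eq_mul])

lemma pForm_apply {V : Submodule k (MvPolynomial (Fin 3) k)} (x y : ↥V) :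
    pForm k V x y = coeff 0 (contract (x : MvPolynomial (Fin 3) k) (y : _)) := rfl

lemma pForm_comm {V : Submodule k (MvPolynomial (Fin 3) k)} (x y : ↥V) :
    pForm k V x y = pForm k V y x := coeff_zero_contract_comm _ _

lemma pForm_isRefl (V : Submodule k (MvPolynomial (Fin 3) k)) :
    (pForm k V).IsRefl := fun x y h => by rw [pForm_comm]; exact h

/-- A subspace closed under taking monomials of its members. -/
def MonClosed (V : Submodule k (MvPolynomial (Fin 3) k)) : Prop :=
  ∀ p ∈ V, ∀ b, coeff b p ≠ 0 → monomial b (1 : k) ∈ V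

lemma H_monClosed (n : ℕ) : MonClosed (homogeneousSubmodule (Fin 3) k n) := by
  intro p hp b hb
  rw [MvPolynomial.mem_homogeneousSubmodule] at hp ⊢
  exact isHomogeneous_monomial _ (isHomogeneous_def.mp hp b hb)

lemma Bsub_monClosed (n : ℕ) : MonClosed (Bsub k n) := by
  intro p hp b hb
  rw [mem_Bsub] at hp ⊢
  refine ⟨isHomogeneous_monomial _ (isHomogeneous_def.mp hp.1 b hb), fun b' hb' => ?_⟩
  rw [MvPolynomial.coeff_monomial] at hb'
  split_ifs at hb' with h
  · rw [← h]; exact hp.2 b hb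
  · exact absurd rfl hb'

lemma pForm_nondeg {V : Submodule k (MvPolynomial (Fin 3) k)} (hV : MonClosed V) :
    (pForm k V).Nondegenerate := by
  have hL : LinearMap.SeparatingLeft (pForm k V) := by
    intro x hx
    by_contra hne
    have hx0 : (x : MvPolynomial (Fin 3) k) ≠ 0 := fun h =>
      hne (Subtype.ext (by rw [h]; rfl))
    obtain ⟨b, hb⟩ := MvPolynomial.ne_zero_iff.mp hx0
    have hy : monomial b (1:k) ∈ V := hV _ x.2 b hb
    have := hx ⟨_, hy⟩
    rw [pForm_apply, coeff_zero_contract_comm, coeff_zero_contract_monomial] at this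
    exact hb this
  exact ⟨hL, fun y hy => hL y fun x => by rw [pForm_comm]; exact hy x⟩

lemma pForm_orth_top {V : Submodule k (MvPolynomial (Fin 3) k)} (hV : MonClosed V) :
    (pForm k V).orthogonal ⊤ = ⊥ := by
  ext x
  rw [LinearMap.BilinForm.mem_orthogonal_iff, Submodule.mem_bot]
  constructor
  · intro h
    refine (pForm_nondeg hV).1 x fun y => ?_
    rw [pForm_comm]
    exact h y Submodule.mem_top
  · intro h n _
    rw [h, map_zero]

lemma pForm_finrank_orth {V : Submodule k (MvPolynomial (Fin 3) k)} (hV : MonClosed V)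
    [FiniteDimensional k ↥V] (W : Submodule k ↥V) :
    Module.finrank k ↥W + Module.finrank k ↥((pForm k V).orthogonal W)
      = Module.finrank k ↥V := by
  have h := LinearMap.BilinForm.finrank_add_finrank_orthogonal (pForm_isRefl V) W
  rw [pForm_orth_top hV, inf_bot_eq, finrank_bot, add_zero] at h
  exact h

lemma pForm_orth_orth {V : Submodule k (MvPolynomial (Fin 3) k)} (hV : MonClosed V)
    [FiniteDimensional k ↥V] (W : Submodule k ↥V) :
    (pForm k V).orthogonal ((pForm k V).orthogonal W) = W := by
  have hle := LinearMap.BilinForm.le_orthogonal_orthogonal (B := pForm k V)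
    (N := W) (pForm_isRefl V)
  have h1 := pForm_finrank_orth hV W
  have h2 := pForm_finrank_orth hV ((pForm k V).orthogonal W)
  exact (Submodule.eq_of_le_of_finrank_le hle (by omega)).symm


/-! ### The two-variable growth lemma -/

variable (k) in
/-- Multiplication by `X i` as a linear map. -/
noncomputable def mX (i : Fin 3) :
    MvPolynomial (Fin 3) k →ₗ[k] MvPolynomial (Fin 3) k :=
  LinearMap.mulLeft k (X i)

lemma mX_apply (i : Fin 3) (p : MvPolynomial (Fin 3) k) : mX k i p = X i * p := rfl

lemma mX_inj (i : Fin 3) : Function.Injective (mX k i) := by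
  intro a b h
  exact mul_left_cancel₀ (MvPolynomial.X_ne_zero i) h

lemma X_mul_eq_mul_monomial (i : Fin 3) (q : MvPolynomial (Fin 3) k) :
    X i * q = q * monomial (Finsupp.single i 1) 1 := by
  rw [show (X i : MvPolynomial (Fin 3) k) = monomial (Finsupp.single i 1) 1 from rfl, mul_comm]

lemma coeff_mul_X_cases {q : MvPolynomial (Fin 3) k} {i : Fin 3} {b : Fin 3 →₀ ℕ}
    (h : coeff b (X i * q) ≠ 0) :
    Finsupp.single i 1 ≤ b ∧ coeff (b - Finsupp.single i 1) q ≠ 0 := by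
  rw [X_mul_eq_mul_monomial, MvPolynomial.coeff_mul_monomial'] at h
  split_ifs at h with hle
  · rw [mul_one] at h
    exact ⟨hle, h⟩
  · exact absurd rfl h

lemma coeff_X_mul_self (i : Fin 3) (q : MvPolynomial (Fin 3) k) (b : Fin 3 →₀ ℕ)
    (hle : Finsupp.single i 1 ≤ b) :
    coeff b (X i * q) = coeff (b - Finsupp.single i 1) q := by
  rw [X_mul_eq_mul_monomial, MvPolynomial.coeff_mul_monomial', if_pos hle, mul_one]

lemma mapX_le {n : ℕ} {V : Submodule k (MvPolynomial (Fin 3) k)} (hV : V ≤ Bsub k n)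
    {i : Fin 3} (hi : i ≠ 0) : Submodule.map (mX k i) V ≤ Bsub k (n + 1) := by
  rintro _ ⟨w, hw, rfl⟩
  have hmem := hV hw
  rw [mem_Bsub] at hmem ⊢
  constructor
  · rw [mX_apply]
    exact hom_cast ((isHomogeneous_X k i).mul hmem.1) (by omega)
  · intro b hb
    rw [mX_apply] at hb
    obtain ⟨hle, hne⟩ := coeff_mul_X_cases hb
    have h0 := hmem.2 _ hne
    rw [Finsupp.tsub_apply, Finsupp.single_apply, if_neg (fun hh : i = 0 => hi hh)] at h0
    omega

lemma hom0_eq_C {p : MvPolynomial (Fin 3) k} (hp : p.IsHomogeneous 0) :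
    p = C (coeff 0 p) := by
  ext b
  rcases eq_or_ne b 0 with rfl | hne
  · rw [show (C (coeff (0 : Fin 3 →₀ ℕ) p) : MvPolynomial (Fin 3) k)
      = monomial 0 (coeff 0 p) from rfl, MvPolynomial.coeff_monomial, if_pos rfl]
  · rw [show (C (coeff (0 : Fin 3 →₀ ℕ) p) : MvPolynomial (Fin 3) k)
      = monomial 0 (coeff 0 p) from rfl, MvPolynomial.coeff_monomial, if_neg (fun h => hne h.symm)]
    by_contra hb
    have := isHomogeneous_def.mp hp b hb
    rw [deg3] at this
    exact hne (by
      ext i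
      fin_cases i <;> simp <;> omega)

lemma single_single_le {b : Fin 3 →₀ ℕ} (h1 : Finsupp.single 1 1 ≤ b)
    (h2 : Finsupp.single 2 1 ≤ b) :
    Finsupp.single 1 1 + Finsupp.single 2 1 ≤ b := by
  rw [Finsupp.single_le_iff] at h1 h2
  intro i
  fin_cases i <;> simp [Finsupp.single_apply] <;> omega

lemma monomial_sing12 : (monomial (Finsupp.single 1 1 + Finsupp.single 2 1) 1
    : MvPolynomial (Fin 3) k) = X 1 * X 2 := by
  rw [show (X 1 : MvPolynomial (Fin 3) k) = monomial (Finsupp.single 1 1) 1 from rfl,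
    show (X 2 : MvPolynomial (Fin 3) k) = monomial (Finsupp.single 2 1) 1 from rfl,
    MvPolynomial.monomial_mul, mul_one]

/-- Key growth lemma: multiplying a nonzero space of binary forms by `x₁, x₂`
increases dimension. -/
lemma grow : ∀ (n : ℕ) (V : Submodule k (MvPolynomial (Fin 3) k)), V ≤ Bsub k n → V ≠ ⊥ →
    Module.finrank k ↥V + 1 ≤
      Module.finrank k ↥(Submodule.map (mX k 1) V ⊔ Submodule.map (mX k 2) V) := by
  intro n
  induction n with
  | zero =>
    intro V hV hVne
    haveI : FiniteDimensional k ↥V := Submodule.finiteDimensional_of_le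
      (le_trans hV (Bsub_le_H 0))
    haveI : FiniteDimensional k ↥(Submodule.map (mX k 1) V) :=
      Submodule.finiteDimensional_of_le (le_trans (mapX_le hV (by decide)) (Bsub_le_H 1))
    haveI : FiniteDimensional k ↥(Submodule.map (mX k 2) V) :=
      Submodule.finiteDimensional_of_le (le_trans (mapX_le hV (by decide)) (Bsub_le_H 1))
    have hinf : Submodule.map (mX k 1) V ⊓ Submodule.map (mX k 2) V = ⊥ := by
      rw [Submodule.eq_bot_iff]
      rintro x ⟨⟨u, hu, hxu⟩, ⟨v, hv, hxv⟩⟩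
      have hu0 : u.IsHomogeneous 0 := ((mem_Bsub).mp (hV hu)).1
      have hueq := hom0_eq_C hu0
      have hcoeff : coeff (Finsupp.single 1 1) x = coeff 0 u := by
        rw [← hxu, mX_apply, coeff_X_mul_self 1 u _ le_rfl, tsub_self]
      have hzero : coeff (Finsupp.single 1 1) x = 0 := by
        by_contra hne
        rw [← hxv, mX_apply] at hne
        obtain ⟨hle, -⟩ := coeff_mul_X_cases hne
        rw [Finsupp.single_le_iff, Finsupp.single_apply] at hle
        simp at hle
      have hu' : u = 0 := by
        rw [hueq, ← hcoeff, hzero, map_zero]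
      rw [← hxu, hu', map_zero]
    have h2 := Submodule.finrank_sup_add_finrank_inf_eq
      (Submodule.map (mX k 1) V) (Submodule.map (mX k 2) V)
    rw [hinf, finrank_bot, add_zero] at h2
    have e1 : Module.finrank k ↥(Submodule.map (mX k 1) V) = Module.finrank k ↥V :=
      (LinearEquiv.finrank_eq (Submodule.equivMapOfInjective _ (mX_inj 1) V)).symm
    have e2 : Module.finrank k ↥(Submodule.map (mX k 2) V) = Module.finrank k ↥V :=
      (LinearEquiv.finrank_eq (Submodule.equivMapOfInjective _ (mX_inj 2) V)).symm
    have hpos : 0 < Module.finrank k ↥V := by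
      rcases Nat.eq_zero_or_pos (Module.finrank k ↥V) with h | h
      · exact absurd (Submodule.finrank_eq_zero.mp h) hVne
      · exact h
    omega
  | succ n IH =>
    intro V hV hVne
    haveI : FiniteDimensional k ↥V := Submodule.finiteDimensional_of_le
      (le_trans hV (Bsub_le_H (n+1)))
    haveI : FiniteDimensional k ↥(Submodule.map (mX k 1) V) :=
      Submodule.finiteDimensional_of_le (le_trans (mapX_le hV (by decide)) (Bsub_le_H (n+2)))
    haveI : FiniteDimensional k ↥(Submodule.map (mX k 2) V) :=
      Submodule.finiteDimensional_of_le (le_trans (mapX_le hV (by decide)) (Bsub_le_H (n+2)))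
    set V' : Submodule k (MvPolynomial (Fin 3) k) :=
      Bsub k n ⊓ (Submodule.comap (mX k 1) V ⊓ Submodule.comap (mX k 2) V) with hV'def
    haveI : FiniteDimensional k ↥V' := Submodule.finiteDimensional_of_le
      (le_trans inf_le_left (Bsub_le_H n))
    -- the equivalence between the intersection and V'
    have hbij : Module.finrank k
        ↥(Submodule.map (mX k 1) V ⊓ Submodule.map (mX k 2) V) = Module.finrank k ↥V' := by
      let δ : ↥V' →ₗ[k] ↥(Submodule.map (mX k 1) V ⊓ Submodule.map (mX k 2) V) :=
        { toFun := fun s => ⟨X 1 * (X 2 * (s : MvPolynomial (Fin 3) k)), by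
            constructor
            · exact ⟨X 2 * (s : MvPolynomial (Fin 3) k), s.2.2.2, rfl⟩
            · refine ⟨X 1 * (s : MvPolynomial (Fin 3) k), s.2.2.1, ?_⟩
              rw [mX_apply]; ring⟩
          map_add' := fun x y => by
            apply Subtype.ext
            simp only [Submodule.coe_add, Submodule.coe_mk]
            ring
          map_smul' := fun r x => by
            apply Subtype.ext
            simp only [SetLike.val_smul, RingHom.id_apply]
            rw [Algebra.mul_smul_comm, Algebra.mul_smul_comm] }
      have hinj : Function.Injective δ := by
        intro a b hab
        apply Subtype.ext
        have h1 : X 1 * (X 2 * (a : MvPolynomial (Fin 3) k))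
            = X 1 * (X 2 * (b : MvPolynomial (Fin 3) k)) := congrArg Subtype.val hab
        exact mul_left_cancel₀ (MvPolynomial.X_ne_zero 1)
          (mul_left_cancel₀ (MvPolynomial.X_ne_zero 2)
            (by rw [show X 2 * (X 1 * (a : MvPolynomial (Fin 3) k))
                = X 1 * (X 2 * (a : MvPolynomial (Fin 3) k)) by ring, h1]; ring))
      have hsurj : Function.Surjective δ := by
        rintro ⟨w, ⟨u, hu, hwu⟩, ⟨v, hv, hwv⟩⟩
        have hdvd : ∀ b, coeff b w ≠ 0 →
            Finsupp.single 1 1 + Finsupp.single 2 1 ≤ b := by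
          intro b hb
          refine single_single_le ?_ ?_
          · rw [← hwu, mX_apply] at hb
            exact (coeff_mul_X_cases hb).1
          · rw [← hwv, mX_apply] at hb
            exact (coeff_mul_X_cases hb).1
        obtain ⟨s, hseq, hscoeff⟩ := div_monomial w _ hdvd
        have hw12 : w = X 1 * (X 2 * s) := by
          rw [hseq, monomial_sing12]; ring
        have hX2s : X 2 * s = u := by
          apply mul_left_cancel₀ (MvPolynomial.X_ne_zero 1)
          rw [← hw12, ← hwu, mX_apply]
        have hX1s : X 1 * s = v := by
          apply mul_left_cancel₀ (MvPolynomial.X_ne_zero 2)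
          rw [show X 2 * (X 1 * s) = X 1 * (X 2 * s) by ring, ← hw12, ← hwv, mX_apply]
        have hwB : w ∈ Bsub k (n + 2) := mapX_le hV (i := 1) (by decide) ⟨u, hu, hwu⟩
        have hwB' := (mem_Bsub).mp hwB
        have hsV' : s ∈ V' := by
          rw [hV'def]
          refine Submodule.mem_inf.mpr ⟨?_, Submodule.mem_inf.mpr ⟨?_, ?_⟩⟩
          · rw [mem_Bsub]
            constructor
            · rw [isHomogeneous_def]
              intro d hd
              rw [hscoeff] at hd
              have := isHomogeneous_def.mp hwB'.1 _ hd
              rw [degree_add3, degree_add3, degree_single3, degree_single3] at this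
              omega
            · intro b hb
              rw [hscoeff] at hb
              have := hwB'.2 _ hb
              rw [Finsupp.add_apply, Finsupp.add_apply, Finsupp.single_apply,
                Finsupp.single_apply] at this
              simpa using this
          · rw [Submodule.mem_comap, mX_apply, hX1s]; exact hv
          · rw [Submodule.mem_comap, mX_apply, hX2s]; exact hu
        exact ⟨⟨s, hsV'⟩, Subtype.ext hw12.symm⟩
      exact (LinearEquiv.finrank_eq (LinearEquiv.ofBijective δ ⟨hinj, hsurj⟩)).symm
    have h2 := Submodule.finrank_sup_add_finrank_inf_eq
      (Submodule.map (mX k 1) V) (Submodule.map (mX k 2) V)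
    have e1 : Module.finrank k ↥(Submodule.map (mX k 1) V) = Module.finrank k ↥V :=
      (LinearEquiv.finrank_eq (Submodule.equivMapOfInjective _ (mX_inj 1) V)).symm
    have e2 : Module.finrank k ↥(Submodule.map (mX k 2) V) = Module.finrank k ↥V :=
      (LinearEquiv.finrank_eq (Submodule.equivMapOfInjective _ (mX_inj 2) V)).symm
    have hpos : 0 < Module.finrank k ↥V := by
      rcases Nat.eq_zero_or_pos (Module.finrank k ↥V) with h | h
      · exact absurd (Submodule.finrank_eq_zero.mp h) hVne
      · exact h
    rcases eq_or_ne V' ⊥ with hV'bot | hV'ne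
    · rw [hV'bot, finrank_bot] at hbij
      omega
    · have hIH := IH V' (inf_le_left) hV'ne
      have hsup_le : Submodule.map (mX k 1) V' ⊔ Submodule.map (mX k 2) V' ≤ V := by
        refine sup_le ?_ ?_
        · rintro _ ⟨s, hs, rfl⟩
          exact hs.2.1
        · rintro _ ⟨s, hs, rfl⟩
          exact hs.2.2
      have hle2 : Module.finrank k ↥(Submodule.map (mX k 1) V' ⊔ Submodule.map (mX k 2) V')
          ≤ Module.finrank k ↥V := finrank_le_of_le hsup_le
      omega


/-! ### Iterated multiplication chain -/

variable (k) in
/-- Chain of subspaces obtained by multiplying with `x₁, x₂` repeatedly. -/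
noncomputable def Wc (A : Submodule k (MvPolynomial (Fin 3) k)) :
    ℕ → Submodule k (MvPolynomial (Fin 3) k)
  | 0 => A
  | t+1 => Submodule.map (mX k 1) (Wc A t) ⊔ Submodule.map (mX k 2) (Wc A t)

lemma Wc_le {A : Submodule k (MvPolynomial (Fin 3) k)} {m : ℕ} (hA : A ≤ Bsub k m) :
    ∀ t, Wc k A t ≤ Bsub k (m + t)
  | 0 => hA
  | t+1 => sup_le (le_trans (Submodule.map_mono (Wc_le hA t))
      (mapX_le le_rfl (by decide)))
    (le_trans (Submodule.map_mono (Wc_le hA t)) (mapX_le le_rfl (by decide)))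

lemma finrank_mono' {M : Type*} [AddCommGroup M] [Module k M] {V W : Submodule k M}
    (h : V ≤ W) [FiniteDimensional k ↥W] :
    Module.finrank k ↥V ≤ Module.finrank k ↥W := by
  have e : Module.finrank k ↥V = Module.finrank k ↥(Submodule.comap W.subtype V) :=
    (Submodule.comapSubtypeEquivOfLe h).symm.finrank_eq
  rw [e]
  exact Submodule.finrank_le _

lemma Wc_finrank {A : Submodule k (MvPolynomial (Fin 3) k)} {m : ℕ}
    (hA : A ≤ Bsub k m) (hAne : A ≠ ⊥) :
    ∀ t, Module.finrank k ↥A + t ≤ Module.finrank k ↥(Wc k A t) := by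
  intro t
  induction t with
  | zero => exact le_of_eq rfl
  | succ t IH =>
    haveI : FiniteDimensional k ↥A :=
      Submodule.finiteDimensional_of_le (le_trans hA (Bsub_le_H m))
    haveI : FiniteDimensional k ↥(Wc k A t) :=
      Submodule.finiteDimensional_of_le (le_trans (Wc_le hA t) (Bsub_le_H (m+t)))
    have hApos : 0 < Module.finrank k ↥A := by
      rcases Nat.eq_zero_or_pos (Module.finrank k ↥A) with h | h
      · exact absurd (Submodule.finrank_eq_zero.mp h) hAne
      · exact h
    have hWne : Wc k A t ≠ ⊥ := by
      intro h
      rw [h, finrank_bot] at IH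
      omega
    have hg := grow (m+t) (Wc k A t) (Wc_le hA t) hWne
    have : Wc k A (t+1) = Submodule.map (mX k 1) (Wc k A t) ⊔ Submodule.map (mX k 2) (Wc k A t) := rfl
    rw [this]
    omega

lemma Wc_contract_zero {A : Submodule k (MvPolynomial (Fin 3) k)} {u : MvPolynomial (Fin 3) k}
    (hu : ∀ υ ∈ A, contract υ u = 0) :
    ∀ t, ∀ w ∈ Wc k A t, contract w u = 0 := by
  intro t
  induction t with
  | zero => exact hu
  | succ t IH =>
    intro w hw
    rcases Submodule.mem_sup.mp hw with ⟨y, hy, z, hz, rfl⟩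
    obtain ⟨y', hy', rfl⟩ := hy
    obtain ⟨z', hz', rfl⟩ := hz
    rw [contract_add_left, mX_apply, mX_apply, contract_mul, contract_mul,
      IH y' hy', IH z' hz', contract_zero_right, contract_zero_right, add_zero]

/-! ### Contraction as a linear map -/

variable (k) in
noncomputable def cBy (G : MvPolynomial (Fin 3) k) :
    MvPolynomial (Fin 3) k →ₗ[k] MvPolynomial (Fin 3) k where
  toFun := fun σ => contract σ G
  map_add' := fun a b => contract_add_left a b G
  map_smul' := fun r a => contract_smul_left r a G

lemma cBy_apply (G σ : MvPolynomial (Fin 3) k) : cBy k G σ = contract σ G := rfl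

/-! ### The main inductive lemma -/

/-- No linear space of operators of degree `m < e` can produce by contraction of a single
form `G` of degree `e + m` every binary form of degree `e`. -/
lemma mainLemma (e : ℕ) (he : 1 ≤ e) :
    ∀ m, m < e → ∀ G : MvPolynomial (Fin 3) k, G.IsHomogeneous (e + m) →
      (∀ P ∈ Bsub k e, ∃ σ ∈ homogeneousSubmodule (Fin 3) k m, contract σ G = P) → False := by
  intro m
  induction m with
  | zero =>
    intro _ G hGhom hyp
    have hP1 : (monomial (Finsupp.single 1 e) 1 : MvPolynomial (Fin 3) k) ∈ Bsub k e := by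
      rw [mem_Bsub]
      refine ⟨isHomogeneous_monomial _ (degree_single3 1 e), fun b hb => ?_⟩
      rw [MvPolynomial.coeff_monomial] at hb
      split_ifs at hb with h
      · rw [← h, Finsupp.single_apply]; simp
      · exact absurd rfl hb
    have hP2 : (monomial (Finsupp.single 2 e) 1 : MvPolynomial (Fin 3) k) ∈ Bsub k e := by
      rw [mem_Bsub]
      refine ⟨isHomogeneous_monomial _ (degree_single3 2 e), fun b hb => ?_⟩
      rw [MvPolynomial.coeff_monomial] at hb
      split_ifs at hb with h
      · rw [← h, Finsupp.single_apply]; simp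
      · exact absurd rfl hb
    obtain ⟨σ1, hσ1H, hσ1⟩ := hyp _ hP1
    obtain ⟨σ2, hσ2H, hσ2⟩ := hyp _ hP2
    rw [MvPolynomial.mem_homogeneousSubmodule] at hσ1H hσ2H
    rw [hom0_eq_C hσ1H, contract_C] at hσ1
    rw [hom0_eq_C hσ2H, contract_C] at hσ2
    set c1 := coeff 0 σ1
    set c2 := coeff 0 σ2
    have h1 : c1 * coeff (Finsupp.single 1 e) G = 1 := by
      have := congrArg (coeff (Finsupp.single 1 e)) hσ1
      rwa [MvPolynomial.coeff_smul, smul_eq_mul, MvPolynomial.coeff_monomial, if_pos rfl] at this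
    have h2 : c2 * coeff (Finsupp.single 1 e) G = 0 := by
      have := congrArg (coeff (Finsupp.single 1 e)) hσ2
      rwa [MvPolynomial.coeff_smul, smul_eq_mul, MvPolynomial.coeff_monomial, if_neg
        (fun h => by
          have := congrArg (fun f : Fin 3 →₀ ℕ => f 1) h
          simp only [Finsupp.single_apply] at this
          simp at this
          omega)] at this
    have h3 : c2 * coeff (Finsupp.single 2 e) G = 1 := by
      have := congrArg (coeff (Finsupp.single 2 e)) hσ2
      rwa [MvPolynomial.coeff_smul, smul_eq_mul, MvPolynomial.coeff_monomial, if_pos rfl] at this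
    have hc2 : c2 = 0 := by
      have hGne : coeff (Finsupp.single 1 e) G ≠ 0 := by
        intro h
        rw [h, mul_zero] at h1
        exact one_ne_zero h1.symm
      rcases mul_eq_zero.mp h2 with h | h
      · exact h
      · exact absurd h hGne
    rw [hc2, zero_mul] at h3
    exact one_ne_zero h3.symm
  | succ m IH =>
    intro hmlt G hGhom hyp
    set H1 := homogeneousSubmodule (Fin 3) k (m+1) with hH1
    set Tsub : Submodule k (MvPolynomial (Fin 3) k) :=
      H1 ⊓ Submodule.comap (cBy k G) (Bsub k e) with hTsub
    haveI : FiniteDimensional k ↥Tsub :=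
      Submodule.finiteDimensional_of_le (inf_le_left : Tsub ≤ H1)
    have hres : ∀ x ∈ Tsub, cBy k G x ∈ Bsub k e := fun x hx =>
      Submodule.mem_comap.mp (Submodule.mem_inf.mp hx).2
    set ψ : ↥Tsub →ₗ[k] ↥(Bsub k e) := (cBy k G).restrict hres with hψ
    have hψval : ∀ σt : ↥Tsub, (ψ σt : MvPolynomial (Fin 3) k)
        = contract (σt : MvPolynomial (Fin 3) k) G := fun σt => rfl
    have hψsurj : Function.Surjective ψ := by
      rintro ⟨P, hP⟩
      obtain ⟨σ, hσH, hσc⟩ := hyp P hP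
      have hσT : σ ∈ Tsub := Submodule.mem_inf.mpr ⟨hσH, Submodule.mem_comap.mpr (by
        rw [cBy_apply, hσc]; exact hP)⟩
      exact ⟨⟨σ, hσT⟩, Subtype.ext (by rw [hψval, hσc])⟩
    set πT : ↥Tsub →ₗ[k] MvPolynomial (Fin 3) k := binPartL.comp Tsub.subtype with hπT
    have hπval : ∀ σt : ↥Tsub, πT σt = binPart (σt : MvPolynomial (Fin 3) k) := fun _ => rfl
    set A := LinearMap.range πT with hA
    set T0 := LinearMap.ker πT with hT0
    set U := Submodule.map ψ T0 with hU
    have hA_le : A ≤ Bsub k (m+1) := by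
      rintro _ ⟨σt, rfl⟩
      rw [hπval, mem_Bsub]
      have hσH : (σt : MvPolynomial (Fin 3) k).IsHomogeneous (m+1) :=
        (Submodule.mem_inf.mp σt.2).1
      exact ⟨binPart_isHomogeneous hσH, fun b hb => binPart_mem_noX0 _ b hb⟩
    have hBnoX0 : ∀ σt : ↥Tsub, contract (σt : MvPolynomial (Fin 3) k) G ∈
        (noX0 : Submodule k _) := by
      intro σt
      have := hres _ σt.2
      rw [cBy_apply] at this
      exact (Submodule.mem_inf.mp this).2
    have hsym : ∀ σ τ : ↥Tsub,
        contract (binPart (σ : MvPolynomial (Fin 3) k)) (contract (τ : MvPolynomial (Fin 3) k) G)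
        = contract (binPart (τ : MvPolynomial (Fin 3) k))
            (contract (σ : MvPolynomial (Fin 3) k) G) := by
      intro σ τ
      rw [← contract_binPart_left (hBnoX0 τ), ← contract_binPart_left (hBnoX0 σ),
        ← contract_mul, ← contract_mul, mul_comm]
    have hAU : ∀ υ ∈ A, ∀ u ∈ U, contract υ (u : MvPolynomial (Fin 3) k) = 0 := by
      rintro _ ⟨σ, rfl⟩ _ ⟨τ0, hτ0, rfl⟩
      rw [hπval, hψval, hsym]
      have : binPart (τ0 : MvPolynomial (Fin 3) k) = 0 := hτ0
      rw [this, contract_zero_left]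
    by_cases hAbot : A = ⊥
    · -- descent to m
      refine IH (by omega) (contract (X 0) G)
        (contract_isHomogeneous (isHomogeneous_X k 0) hGhom (by omega)) ?_
      intro P hP
      obtain ⟨σt, hσt⟩ := hψsurj ⟨P, hP⟩
      have hσB : binPart (σt : MvPolynomial (Fin 3) k) = 0 := by
        have : πT σt ∈ A := LinearMap.mem_range_self πT σt
        rw [hAbot, Submodule.mem_bot] at this
        rw [← hπval]
        exact this
      have hbz : ∀ b, coeff b (σt : MvPolynomial (Fin 3) k) ≠ 0 → Finsupp.single 0 1 ≤ b := by
        intro b hb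
        have hb' : coeff b ((σt : MvPolynomial (Fin 3) k)
            - binPart (σt : MvPolynomial (Fin 3) k)) ≠ 0 := by
          rw [hσB, sub_zero]
          exact hb
        have := coeff_sub_binPart hb'
        rw [Finsupp.single_le_iff]
        omega
      obtain ⟨q, hqeq, hqc⟩ := div_monomial _ _ hbz
      have hσH : (σt : MvPolynomial (Fin 3) k).IsHomogeneous (m+1) :=
        (Submodule.mem_inf.mp σt.2).1
      refine ⟨q, ?_, ?_⟩
      · rw [MvPolynomial.mem_homogeneousSubmodule, isHomogeneous_def]
        intro b hb
        rw [hqc] at hb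
        have := isHomogeneous_def.mp hσH _ hb
        rw [degree_add3, degree_single3] at this
        omega
      · have : q * monomial (Finsupp.single 0 1) 1 = (σt : MvPolynomial (Fin 3) k) := hqeq.symm
        rw [← contract_mul, show (X 0 : MvPolynomial (Fin 3) k)
          = monomial (Finsupp.single 0 1) 1 from rfl, this]
        have := congrArg Subtype.val hσt
        rw [hψval] at this
        exact this
    · -- dimension contradiction
      have hrank1 := LinearMap.finrank_range_add_finrank_ker πT
      rw [← hA, ← hT0] at hrank1
      set Qm := (Submodule.mkQ U).comp ψ with hQm
      have hQsurj : Function.Surjective Qm := by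
        intro y
        obtain ⟨z, hz⟩ := Submodule.mkQ_surjective U y
        obtain ⟨x, hx⟩ := hψsurj z
        exact ⟨x, by rw [hQm, LinearMap.comp_apply, hx, hz]⟩
      have hrank2 := LinearMap.finrank_range_add_finrank_ker Qm
      have hrange : LinearMap.range Qm = ⊤ := LinearMap.range_eq_top.mpr hQsurj
      have hkerle : T0 ≤ LinearMap.ker Qm := by
        intro x hx
        rw [LinearMap.mem_ker, hQm, LinearMap.comp_apply, Submodule.mkQ_apply,
          Submodule.Quotient.mk_eq_zero]
        exact ⟨x, hx, rfl⟩
      have hker_mono : Module.finrank k ↥T0 ≤ Module.finrank k ↥(LinearMap.ker Qm) :=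
        finrank_mono' hkerle
      have hqrk : Module.finrank k ↥(LinearMap.range Qm)
          = Module.finrank k (↥(Bsub k e) ⧸ U) := by
        rw [hrange]
        exact finrank_top k _
      have hquot := Submodule.finrank_quotient_add_finrank U
      -- c1 : finrank (Bsub k e) ≤ finrank U + finrank A
      have hc1 : Module.finrank k ↥(Bsub k e)
          ≤ Module.finrank k ↥U + Module.finrank k ↥A := by omega
      -- the orthogonality count
      set t := e - (m+1) with ht
      have hte : (m+1) + t = e := by omega
      have hWle : Wc k A t ≤ Bsub k e := by
        have := Wc_le hA_le t
        rwa [hte] at this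
      haveI : FiniteDimensional k ↥(Wc k A t) :=
        Submodule.finiteDimensional_of_le (le_trans hWle (Bsub_le_H e))
      set Wsub := Submodule.comap (Bsub k e).subtype (Wc k A t) with hWsub
      have hWsubrank : Module.finrank k ↥Wsub = Module.finrank k ↥(Wc k A t) :=
        (Submodule.comapSubtypeEquivOfLe hWle).finrank_eq
      have hUorth : U ≤ (pForm k (Bsub k e)).orthogonal Wsub := by
        intro u hu
        rw [LinearMap.BilinForm.mem_orthogonal_iff]
        intro n hn
        have hnW : (n : MvPolynomial (Fin 3) k) ∈ Wc k A t := hn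
        have hzero : contract (n : MvPolynomial (Fin 3) k) (u : MvPolynomial (Fin 3) k) = 0 :=
          Wc_contract_zero (fun υ hυ => hAU υ hυ u hu) t _ hnW
        show pForm k (Bsub k e) n u = 0
        rw [pForm_apply, hzero, MvPolynomial.coeff_zero]
      have horth := pForm_finrank_orth (Bsub_monClosed e) Wsub
      have hUle : Module.finrank k ↥U
          ≤ Module.finrank k ↥((pForm k (Bsub k e)).orthogonal Wsub) := finrank_mono' hUorth
      have hgrow := Wc_finrank hA_le hAbot t
      have hBe := finrank_Bsub (k := k) e
      omega


/-! ### Part 2: the inclusion `Ann(F)ₑ ⊆ (α₀)` is impossible -/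

lemma part2core (e : ℕ) (he : 2 ≤ e) (F : MvPolynomial (Fin 3) k)
    (hFhom : F.IsHomogeneous (2*e - 2))
    (hincl : ∀ σ ∈ homogeneousSubmodule (Fin 3) k e, contract σ F = 0 →
        σ ∈ Ideal.span {(X 0 : MvPolynomial (Fin 3) k)}) : False := by
  classical
  set F' := contract (X 0) F with hF'def
  have hF'hom : F'.IsHomogeneous (2*e - 3) :=
    contract_isHomogeneous (isHomogeneous_X k 0) hFhom (by omega)
  set K : Submodule k (MvPolynomial (Fin 3) k) :=
    homogeneousSubmodule (Fin 3) k (e-2) ⊓ LinearMap.ker (cBy k F') with hKdef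
  set W' : Submodule k (MvPolynomial (Fin 3) k) :=
    Submodule.map (cBy k F') (homogeneousSubmodule (Fin 3) k (e-1)) with hW'def
  have hW'le : W' ≤ homogeneousSubmodule (Fin 3) k (e-2) := by
    rintro _ ⟨ρ, hρ, rfl⟩
    have hρ' : ρ.IsHomogeneous (e-1) := hρ
    rw [MvPolynomial.mem_homogeneousSubmodule, cBy_apply]
    exact contract_isHomogeneous hρ' hF'hom (by omega)
  have hKle : K ≤ homogeneousSubmodule (Fin 3) k (e-2) := inf_le_left
  have hsurjB : ∀ P ∈ Bsub k e, ∃ σ ∈ homogeneousSubmodule (Fin 3) k (e-2),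
      contract σ F = P := by
    set Im : Submodule k (MvPolynomial (Fin 3) k) := Submodule.map (cBy k F) K with hImdef
    have hIm_le : Im ≤ Bsub k e := by
      rintro _ ⟨σ, hσ, rfl⟩
      have hσH := (Submodule.mem_inf.mp hσ).1
      have hσK : contract σ F' = 0 := (Submodule.mem_inf.mp hσ).2
      rw [MvPolynomial.mem_homogeneousSubmodule] at hσH
      rw [cBy_apply, mem_Bsub]
      constructor
      · exact contract_isHomogeneous hσH hFhom (by omega)
      · have hx0 : contract (X 0) (contract σ F) = 0 := by
          rw [← contract_mul, mul_comm, contract_mul, ← hF'def, hσK]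
        exact mem_noX0_of_contractX0 hx0
    by_contra hnot
    push_neg at hnot
    obtain ⟨P, hP, hPnc⟩ := hnot
    set Im' := Submodule.comap (Bsub k e).subtype Im with hIm'def
    have hne_top : Im' ≠ ⊤ := by
      intro htop
      have hPI : (⟨P, hP⟩ : ↥(Bsub k e)) ∈ Im' := htop ▸ Submodule.mem_top
      rw [hIm'def, Submodule.mem_comap] at hPI
      obtain ⟨σ, hσK, hσc⟩ := hPI
      exact hPnc σ (hKle hσK) hσc
    have horthne : (pForm k (Bsub k e)).orthogonal Im' ≠ ⊥ := by
      intro hbot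
      have hfr := pForm_finrank_orth (Bsub_monClosed e) Im'
      rw [hbot, finrank_bot, add_zero] at hfr
      exact hne_top (Submodule.eq_top_of_finrank_eq hfr)
    obtain ⟨τh, hτmem, hτne⟩ := Submodule.ne_bot_iff _ |>.mp horthne
    have hτB := τh.2
    have hperp : ∀ σ ∈ K, coeff 0 (contract σ (contract (τh : MvPolynomial (Fin 3) k) F))
        = 0 := by
      intro σ hσ
      have hchain : contract σ (contract (τh : MvPolynomial (Fin 3) k) F)
          = contract (τh : MvPolynomial (Fin 3) k) (contract σ F) := by
        rw [← contract_mul, mul_comm, contract_mul]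
      rw [hchain, coeff_zero_contract_comm]
      have hyB : contract σ F ∈ Bsub k e := hIm_le ⟨σ, hσ, rfl⟩
      have hyI : (⟨contract σ F, hyB⟩ : ↥(Bsub k e)) ∈ Im' := by
        rw [hIm'def, Submodule.mem_comap]
        exact ⟨σ, hσ, rfl⟩
      have := (LinearMap.BilinForm.mem_orthogonal_iff.mp hτmem) _ hyI
      exact this
    have hxH : contract (τh : MvPolynomial (Fin 3) k) F
        ∈ homogeneousSubmodule (Fin 3) k (e-2) := by
      rw [MvPolynomial.mem_homogeneousSubmodule]
      have hτH : (τh : MvPolynomial (Fin 3) k).IsHomogeneous e := (mem_Bsub.mp hτB).1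
      exact contract_isHomogeneous hτH hFhom (by omega)
    set Msub := homogeneousSubmodule (Fin 3) k (e-2) with hMsub
    set W'sub := Submodule.comap Msub.subtype W' with hW'sub
    set Ksub := Submodule.comap Msub.subtype K with hKsub
    have horthW' : (pForm k Msub).orthogonal W'sub = Ksub := by
      ext σh
      rw [LinearMap.BilinForm.mem_orthogonal_iff]
      constructor
      · intro h
        rw [hKsub, Submodule.mem_comap, hKdef, Submodule.mem_inf]
        refine ⟨σh.2, ?_⟩
        rw [LinearMap.mem_ker, cBy_apply]
        set z := contract (σh : MvPolynomial (Fin 3) k) F' with hz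
        by_contra hzne
        obtain ⟨b, hb⟩ := MvPolynomial.ne_zero_iff.mp hzne
        have hzhom : z.IsHomogeneous (e-1) := by
          have hσH : (σh : MvPolynomial (Fin 3) k).IsHomogeneous (e-2) := σh.2
          exact contract_isHomogeneous hσH hF'hom (by omega)
        have hρH : (monomial b 1 : MvPolynomial (Fin 3) k)
            ∈ homogeneousSubmodule (Fin 3) k (e-1) := by
          rw [MvPolynomial.mem_homogeneousSubmodule]
          exact isHomogeneous_monomial _ (isHomogeneous_def.mp hzhom b hb)
        have hwW' : contract (monomial b 1) F' ∈ W' := ⟨monomial b 1, hρH, rfl⟩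
        have hwM : contract (monomial b 1) F' ∈ Msub := hW'le hwW'
        have hw' : (⟨contract (monomial b 1) F', hwM⟩ : ↥Msub) ∈ W'sub := by
          rw [hW'sub, Submodule.mem_comap]
          exact hwW'
        have hoB := h _ hw'
        have : coeff 0 (contract (contract (monomial b 1) F')
            (σh : MvPolynomial (Fin 3) k)) = 0 := hoB
        rw [coeff_zero_contract_comm, ← contract_mul, mul_comm, contract_mul, ← hz,
          coeff_zero_contract_monomial] at this
        exact hb this
      · intro hσ w hw
        rw [hKsub, Submodule.mem_comap, hKdef, Submodule.mem_inf] at hσ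
        have hσK : contract (σh : MvPolynomial (Fin 3) k) F' = 0 := hσ.2
        rw [hW'sub, Submodule.mem_comap] at hw
        obtain ⟨ρ, hρH, hρ⟩ := hw
        have hρ2 : contract ρ F' = (w : MvPolynomial (Fin 3) k) := hρ
        show coeff 0 (contract (w : MvPolynomial (Fin 3) k) (σh : MvPolynomial (Fin 3) k)) = 0
        rw [coeff_zero_contract_comm, ← hρ2, ← contract_mul, mul_comm,
          contract_mul, hσK, contract_zero_right, MvPolynomial.coeff_zero]
    have hxperp : (⟨contract (τh : MvPolynomial (Fin 3) k) F, hxH⟩ : ↥Msub)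
        ∈ (pForm k Msub).orthogonal Ksub := by
      rw [LinearMap.BilinForm.mem_orthogonal_iff]
      intro n hn
      rw [hKsub, Submodule.mem_comap] at hn
      exact hperp _ hn
    rw [← horthW', pForm_orth_orth (H_monClosed (e-2)) W'sub] at hxperp
    rw [hW'sub, Submodule.mem_comap] at hxperp
    obtain ⟨ρ, hρH, hρ⟩ := hxperp
    have hρ3 : contract ρ F' = contract (τh : MvPolynomial (Fin 3) k) F := hρ
    have hρH' : ρ.IsHomogeneous (e-1) := hρH
    have hσ0H : ((τh : MvPolynomial (Fin 3) k) - ρ * X 0)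
        ∈ homogeneousSubmodule (Fin 3) k e := by
      refine Submodule.sub_mem _ (Bsub_le_H e hτB) ?_
      rw [MvPolynomial.mem_homogeneousSubmodule]
      exact hom_cast (hρH'.mul (isHomogeneous_X k 0)) (by omega)
    have hσ0c : contract ((τh : MvPolynomial (Fin 3) k) - ρ * X 0) F = 0 := by
      rw [contract_sub_left, contract_mul, ← hF'def, hρ3, sub_self]
    have hdvd := hincl _ hσ0H hσ0c
    rw [Ideal.mem_span_singleton] at hdvd
    obtain ⟨q, hq⟩ := hdvd
    have hτeq : (τh : MvPolynomial (Fin 3) k) = X 0 * (q + ρ) := by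
      have : (τh : MvPolynomial (Fin 3) k) - ρ * X 0 = X 0 * q := hq
      have h2 : (τh : MvPolynomial (Fin 3) k) = X 0 * q + ρ * X 0 := by
        rw [← this]; ring
      rw [h2]; ring
    have hτzero : (τh : MvPolynomial (Fin 3) k) = 0 := by
      ext b
      rw [MvPolynomial.coeff_zero]
      rcases eq_or_ne (coeff b (τh : MvPolynomial (Fin 3) k)) 0 with h | h
      · exact h
      · have hb0 : b 0 = 0 := (mem_Bsub.mp hτB).2 b h
        rw [hτeq, X_mul_eq_mul_monomial, MvPolynomial.coeff_mul_monomial', if_neg]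
        rw [Finsupp.single_le_iff]
        omega
    exact hτne (Subtype.ext hτzero)
  exact mainLemma e (by omega) (e-2) (by omega) F (hom_cast hFhom (by omega))
    (fun P hP => hsurjB P hP)


/-! ### Part 1 machinery -/

lemma binPart_X0mul (q : MvPolynomial (Fin 3) k) : binPart (X 0 * q) = 0 := by
  ext b
  rw [coeff_binPart, MvPolynomial.coeff_zero]
  split_ifs with h0
  · rw [X_mul_eq_mul_monomial, MvPolynomial.coeff_mul_monomial', if_neg]
    rw [Finsupp.single_le_iff]
    omega
  · rfl

lemma binPart_zero : binPart (0 : MvPolynomial (Fin 3) k) = 0 := by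
  ext b
  rw [coeff_binPart, MvPolynomial.coeff_zero]
  split_ifs <;> rfl

lemma finrank_H_succ (m : ℕ) :
    Module.finrank k ↥(homogeneousSubmodule (Fin 3) k (m+1))
      = Module.finrank k ↥(homogeneousSubmodule (Fin 3) k m) + (m + 2) := by
  classical
  have hmem : ∀ (x : ↥(homogeneousSubmodule (Fin 3) k m) × ↥(Bsub k (m+1))),
      X 0 * (x.1 : MvPolynomial (Fin 3) k) + (x.2 : MvPolynomial (Fin 3) k)
        ∈ homogeneousSubmodule (Fin 3) k (m+1) := by
    intro x
    refine Submodule.add_mem _ ?_ (Bsub_le_H _ x.2.2)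
    rw [MvPolynomial.mem_homogeneousSubmodule]
    exact hom_cast ((isHomogeneous_X k 0).mul
      ((MvPolynomial.mem_homogeneousSubmodule _ _).mp x.1.2)) (by omega)
  let Φ : (↥(homogeneousSubmodule (Fin 3) k m) × ↥(Bsub k (m+1))) →ₗ[k]
      ↥(homogeneousSubmodule (Fin 3) k (m+1)) :=
    { toFun := fun x => ⟨X 0 * (x.1 : MvPolynomial (Fin 3) k)
        + (x.2 : MvPolynomial (Fin 3) k), hmem x⟩
      map_add' := fun x y => Subtype.ext (by
        simp only [Submodule.coe_add, Prod.fst_add, Prod.snd_add]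
        ring)
      map_smul' := fun r x => Subtype.ext (by
        simp only [Prod.smul_fst, Prod.smul_snd, SetLike.val_smul, RingHom.id_apply,
          smul_add, Algebra.mul_smul_comm]) }
  have hinj : Function.Injective Φ := by
    intro x y hxy
    have hval : X 0 * (x.1 : MvPolynomial (Fin 3) k) + (x.2 : MvPolynomial (Fin 3) k)
        = X 0 * (y.1 : MvPolynomial (Fin 3) k) + (y.2 : MvPolynomial (Fin 3) k) :=
      congrArg Subtype.val hxy
    have hbin : (x.2 : MvPolynomial (Fin 3) k) = (y.2 : MvPolynomial (Fin 3) k) := by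
      have := congrArg binPart hval
      rwa [binPart_add, binPart_add, binPart_X0mul, binPart_X0mul, zero_add, zero_add,
        binPart_eq_self ((Submodule.mem_inf.mp x.2.2).2),
        binPart_eq_self ((Submodule.mem_inf.mp y.2.2).2)] at this
    have hfst : (x.1 : MvPolynomial (Fin 3) k) = (y.1 : MvPolynomial (Fin 3) k) := by
      rw [hbin] at hval
      have h2 : X 0 * (x.1 : MvPolynomial (Fin 3) k)
          = X 0 * (y.1 : MvPolynomial (Fin 3) k) := by
        have := add_right_cancel hval
        exact this
      exact mul_left_cancel₀ (MvPolynomial.X_ne_zero 0) h2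
    exact Prod.ext (Subtype.ext hfst) (Subtype.ext hbin)
  have hsurj : Function.Surjective Φ := by
    intro y
    set p := (y : MvPolynomial (Fin 3) k) with hp
    have hyhom : p.IsHomogeneous (m+1) := y.2
    have hPB : binPart p ∈ Bsub k (m+1) := by
      rw [mem_Bsub]
      exact ⟨binPart_isHomogeneous hyhom, fun b hb => binPart_mem_noX0 p b hb⟩
    have hsub : ∀ b, coeff b (p - binPart p) ≠ 0 → Finsupp.single 0 1 ≤ b := by
      intro b hb
      have := coeff_sub_binPart hb
      rw [Finsupp.single_le_iff]
      omega
    obtain ⟨q, hqeq, hqc⟩ := div_monomial _ _ hsub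
    have hqhom : q ∈ homogeneousSubmodule (Fin 3) k m := by
      rw [MvPolynomial.mem_homogeneousSubmodule, isHomogeneous_def]
      intro b hb
      rw [hqc] at hb
      have hsubhom : (p - binPart p).IsHomogeneous (m+1) :=
        hyhom.sub (binPart_isHomogeneous hyhom)
      have := isHomogeneous_def.mp hsubhom _ hb
      rw [degree_add3, degree_single3] at this
      omega
    refine ⟨(⟨q, hqhom⟩, ⟨binPart p, hPB⟩), Subtype.ext ?_⟩
    show X 0 * q + binPart p = p
    rw [X_mul_eq_mul_monomial, ← hqeq]
    ring
  have heq := LinearEquiv.finrank_eq (LinearEquiv.ofBijective Φ ⟨hinj, hsurj⟩)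
  rw [Module.finrank_prod, finrank_Bsub] at heq
  omega

lemma annPiece_eq (F : MvPolynomial (Fin 3) k) (a : ℕ) :
    annPiece F a = homogeneousSubmodule (Fin 3) k a ⊓ LinearMap.ker (cBy k F) := by
  apply le_antisymm
  · rw [annPiece, Submodule.span_le]
    intro σ hσ
    exact Submodule.mem_inf.mpr ⟨hσ.1, LinearMap.mem_ker.mpr hσ.2⟩
  · intro σ hσ
    rw [annPiece]
    exact Submodule.subset_span ⟨(Submodule.mem_inf.mp hσ).1,
      LinearMap.mem_ker.mp (Submodule.mem_inf.mp hσ).2⟩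

/-- Deriving the inclusion `Ann(F)ₑ ⊆ (α₀)` from the Hilbert function equality. -/
lemma inclusionFromH (e : ℕ) (he : 2 ≤ e) (F : MvPolynomial (Fin 3) k)
    (h1 : hilbAnn F e = (e + 1) + hilbAnn (contract (X 0) F) (e-1)) :
    ∀ σ ∈ homogeneousSubmodule (Fin 3) k e, contract σ F = 0 →
      σ ∈ Ideal.span {(X 0 : MvPolynomial (Fin 3) k)} := by
  classical
  set F' := contract (X 0) F with hF'def
  set AnnE : Submodule k (MvPolynomial (Fin 3) k) :=
    homogeneousSubmodule (Fin 3) k e ⊓ LinearMap.ker (cBy k F) with hAnnE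
  set AnnE' : Submodule k (MvPolynomial (Fin 3) k) :=
    homogeneousSubmodule (Fin 3) k (e-1) ⊓ LinearMap.ker (cBy k F') with hAnnE'
  have hu1 : hilbAnn F e = Module.finrank k ↥(homogeneousSubmodule (Fin 3) k e)
      - Module.finrank k ↥AnnE := by
    rw [hilbAnn, annPiece_eq]
  have hu2 : hilbAnn F' (e-1) = Module.finrank k ↥(homogeneousSubmodule (Fin 3) k (e-1))
      - Module.finrank k ↥AnnE' := by
    rw [hilbAnn, annPiece_eq]
  have hle1 : Module.finrank k ↥AnnE
      ≤ Module.finrank k ↥(homogeneousSubmodule (Fin 3) k e) :=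
    finrank_mono' inf_le_left
  have hle2 : Module.finrank k ↥AnnE'
      ≤ Module.finrank k ↥(homogeneousSubmodule (Fin 3) k (e-1)) :=
    finrank_mono' inf_le_left
  have hstep : Module.finrank k ↥(homogeneousSubmodule (Fin 3) k e)
      = Module.finrank k ↥(homogeneousSubmodule (Fin 3) k (e-1)) + (e + 1) := by
    have := finrank_H_succ (k := k) (e-1)
    rw [show e - 1 + 1 = e from by omega, show e - 1 + 2 = e + 1 from by omega] at this
    exact this
  rw [hu1, hu2] at h1
  have hdim : Module.finrank k ↥AnnE = Module.finrank k ↥AnnE' := by omega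
  -- multiplication by X 0
  have hres : ∀ x ∈ AnnE', mX k 0 x ∈ AnnE := by
    intro x hx
    obtain ⟨hxH, hxK⟩ := Submodule.mem_inf.mp hx
    rw [MvPolynomial.mem_homogeneousSubmodule] at hxH
    refine Submodule.mem_inf.mpr ⟨?_, ?_⟩
    · rw [MvPolynomial.mem_homogeneousSubmodule, mX_apply]
      exact hom_cast ((isHomogeneous_X k 0).mul hxH) (by omega)
    · rw [LinearMap.mem_ker, cBy_apply, mX_apply, mul_comm, contract_mul, ← hF'def]
      exact LinearMap.mem_ker.mp hxK
  set μL : ↥AnnE' →ₗ[k] ↥AnnE := (mX k 0).restrict hres with hμL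
  have hinj : Function.Injective μL := by
    intro a b hab
    apply Subtype.ext
    exact mX_inj 0 (congrArg Subtype.val hab)
  have hrange : LinearMap.range μL = ⊤ := by
    haveI : FiniteDimensional k ↥AnnE' :=
      Submodule.finiteDimensional_of_le (inf_le_left : AnnE' ≤ _)
    haveI : FiniteDimensional k ↥AnnE :=
      Submodule.finiteDimensional_of_le (inf_le_left : AnnE ≤ _)
    apply Submodule.eq_top_of_finrank_eq
    have hrk := LinearMap.finrank_range_add_finrank_ker μL
    rw [LinearMap.ker_eq_bot.mpr hinj, finrank_bot, add_zero] at hrk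
    rw [hrk, ← hdim]
  intro σ hσH hσc
  have hσA : (⟨σ, Submodule.mem_inf.mpr ⟨hσH, LinearMap.mem_ker.mpr hσc⟩⟩ : ↥AnnE)
      ∈ LinearMap.range μL := by
    rw [hrange]
    exact Submodule.mem_top
  obtain ⟨x, hx⟩ := hσA
  have hval : X 0 * (x : MvPolynomial (Fin 3) k) = σ := congrArg Subtype.val hx
  rw [Ideal.mem_span_singleton]
  exact ⟨(x : MvPolynomial (Fin 3) k), hval.symm⟩

end ApolarHelper

/-- Part of the proof of Lemma 4.2 (even degree case).  Let `F ≠ 0` be a ternary form of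
even degree `d = 2e − 2` (char `k` zero or `> d`), and put `f`, `g` for the Hilbert
functions of `S/Ann(F)` and `S/Ann(α₀ ∘ F)`.  If `f(a+1) = a + 2 + g(a)` for all
`a ≤ e − 1` (which holds when `Ann(F)_e ⊆ (α₀)`), then `f(e−2) = f(e−1) + 1`, which
contradicts the unimodality of `f`; hence `Ann(F)_e` is not contained in `(α₀)`. -/
theorem hilbert_contradiction_even_degree {e : ℕ} (he : 2 ≤ e)
    (hchar : ∀ i : ℕ, 0 < i → i ≤ 2 * e - 2 → (i : k) ≠ 0)
    (F : MvPolynomial (Fin 3) k) (hF : F ≠ 0)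
    (hFhom : F.IsHomogeneous (2 * e - 2)) :
    ((∀ a : ℕ, a + 1 ≤ e →
        hilbAnn F (a + 1) = a + 2 + hilbAnn (contract (X 0) F) a) →
      hilbAnn F (e - 2) = hilbAnn F (e - 1) + 1) ∧
    ¬ (∀ σ ∈ homogeneousSubmodule (Fin 3) k e, contract σ F = 0 →
        σ ∈ Ideal.span {(X 0 : MvPolynomial (Fin 3) k)}) := by
  have hpart2 : ¬ (∀ σ ∈ homogeneousSubmodule (Fin 3) k e, contract σ F = 0 →
      σ ∈ Ideal.span {(X 0 : MvPolynomial (Fin 3) k)}) :=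
    fun hincl => ApolarHelper.part2core e he F hFhom hincl
  refine ⟨?_, hpart2⟩
  intro HH
  exfalso
  apply hpart2
  have h1 := HH (e-1) (by omega)
  rw [show e - 1 + 1 = e from by omega, show e - 1 + 2 = e + 1 from by omega] at h1
  exact ApolarHelper.inclusionFromH e he F h1
end

section
/- Let S be a standard ℕ-graded polynomial ring over an infinite field, I^sat a saturated one-dimensional homogeneous ideal with linear transverse element ℓ, and suppose multiplication by ℓ on Ext¹_S(I^sat, S/I^sat) is injective. Then for every subideal K ⊆ I^sat with ℓ^N · I^sat ⊆ K for some N, the natural map Ext¹_S(I^sat/K, S/I^sat) → Ext¹_S(I^sat, S/I^sat) is zero. -/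
open CategoryTheory Category Limits

namespace ExtCentralAux

variable {R : Type*} [CommRing R] {C : Type*} [Category C] [Abelian C]
  [CategoryTheory.Linear R C]

lemma shift_smul (r : R) (a : ℤ) (P : CochainComplex C ℤ) :
    (CategoryTheory.shiftFunctor (CochainComplex C ℤ) a).map (r • 𝟙 P)
      = r • 𝟙 (P⟦a⟧) := by
  ext n
  simp

lemma single_smul (r : R) (X : C) :
    (CochainComplex.singleFunctor C 0).map (r • 𝟙 X)
      = r • 𝟙 ((CochainComplex.singleFunctor C 0).obj X) := by
  ext n
  by_cases h : n = 0
  · subst h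
    show ((HomologicalComplex.single C (ComplexShape.up ℤ) 0).map (r • 𝟙 X)).f 0 = _
    rw [HomologicalComplex.single_map_f_self]
    simp [Linear.comp_smul, Linear.smul_comp]
    rfl
  · apply IsZero.eq_of_src
    exact (HomologicalComplex.isZero_single_obj_X _ _ _ _ h)

variable [HasDerivedCategory C]

/-- multiplication by `r` as a natural endomorphism of `Q`. -/
noncomputable def smulQ (r : R) :
    DerivedCategory.Q (C := C) ⟶ DerivedCategory.Q :=
  { app := fun K => DerivedCategory.Q.map (r • 𝟙 K)
    naturality := fun K L f => by
      rw [← Functor.map_comp, ← Functor.map_comp, Linear.comp_smul, Linear.smul_comp,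
        comp_id, id_comp] }

/-- multiplication by `r` as a natural endomorphism of the identity of the derived category. -/
noncomputable def smulId (r : R) : 𝟭 (DerivedCategory C) ⟶ 𝟭 (DerivedCategory C) :=
  Localization.liftNatTrans DerivedCategory.Q
    (HomologicalComplex.quasiIso C (ComplexShape.up ℤ))
    DerivedCategory.Q DerivedCategory.Q (𝟭 _) (𝟭 _) (smulQ r)

lemma smulId_app (r : R) (K : CochainComplex C ℤ) :
    (smulId r).app (DerivedCategory.Q.obj K) = DerivedCategory.Q.map (r • 𝟙 K) := by
  rw [smulId, Localization.liftNatTrans_app]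
  simp [Localization.Lifting.iso, smulQ]

lemma smulId_conj (r : R) {A B : DerivedCategory C} (e : A ≅ B) :
    (smulId r).app A = e.hom ≫ (smulId r).app B ≫ e.inv := by
  have h := (smulId r).naturality e.hom
  simp only [Functor.id_map] at h
  rw [← assoc, h, assoc, e.hom_inv_id]
  simp

lemma smulId_app_shift_Q (r : R) (a : ℤ) (K : CochainComplex C ℤ) :
    (smulId r).app ((DerivedCategory.Q.obj K)⟦a⟧)
      = ((smulId r).app (DerivedCategory.Q.obj K))⟦a⟧' := by
  have conj : (smulId r).app ((DerivedCategory.Q.obj K)⟦a⟧)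
      = (DerivedCategory.Q.commShiftIso a).inv.app K ≫
          (smulId r).app (DerivedCategory.Q.obj (K⟦a⟧)) ≫
          (DerivedCategory.Q.commShiftIso a).hom.app K :=
    smulId_conj r ⟨(DerivedCategory.Q.commShiftIso a).inv.app K,
      (DerivedCategory.Q.commShiftIso a).hom.app K, by simp, by simp⟩
  rw [conj, smulId_app, ← shift_smul]
  have nat := (DerivedCategory.Q.commShiftIso a).inv.naturality (r • 𝟙 K)
  dsimp at nat ⊢
  rw [← assoc, ← nat, assoc, Iso.inv_hom_id_app]
  simp [smulId_app]

lemma smulId_app_shift (r : R) (a : ℤ) (A : DerivedCategory C) :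
    (smulId r).app (A⟦a⟧) = ((smulId r).app A)⟦a⟧' := by
  haveI : (DerivedCategory.Q (C := C)).EssSurj :=
    Localization.essSurj _ (HomologicalComplex.quasiIso C (ComplexShape.up ℤ))
  set K := DerivedCategory.Q.objPreimage A
  have e : DerivedCategory.Q.obj K ≅ A := DerivedCategory.Q.objObjPreimageIso A
  have h1 := smulId_conj r ((shiftFunctor (DerivedCategory C) a).mapIso e.symm)
  rw [h1]
  dsimp
  rw [smulId_app_shift_Q, smulId_conj r e.symm]
  dsimp
  simp [← Functor.map_comp]


lemma smulId_app_single (r : R) (X : C) :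
    (smulId r).app ((DerivedCategory.singleFunctor C 0).obj X)
      = (DerivedCategory.singleFunctor C 0).map (r • 𝟙 X) := by
  let E : DerivedCategory.singleFunctor C 0 ≅
      CochainComplex.singleFunctor C 0 ⋙ DerivedCategory.Q :=
    (SingleFunctors.evaluation C (DerivedCategory C) (0 : ℤ)).mapIso
      (DerivedCategory.singleFunctorsPostcompQIso C)
  have conj := smulId_conj r (E.app X)
  rw [conj]
  have h1 : (smulId r).app ((CochainComplex.singleFunctor C 0 ⋙ DerivedCategory.Q).obj X)
      = (CochainComplex.singleFunctor C 0 ⋙ DerivedCategory.Q).map (r • 𝟙 X) := by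
    dsimp
    rw [smulId_app, ← single_smul]
  rw [h1]
  have h2 := E.hom.naturality (r • 𝟙 X)
  simp only [Iso.app_hom, Iso.app_inv]
  rw [← assoc, ← h2, assoc]
  simp

universe w

lemma ext_smul_comm [HasExt.{w} C] (r : R) {X Y : C} (α : Abelian.Ext X Y 1) :
    (Abelian.Ext.mk₀ (r • 𝟙 X)).comp α (zero_add 1)
      = α.comp (Abelian.Ext.mk₀ (r • 𝟙 Y)) (add_zero 1) := by
  apply Abelian.Ext.ext
  rw [Abelian.Ext.comp_hom, Abelian.Ext.comp_hom, Abelian.Ext.mk₀_hom, Abelian.Ext.mk₀_hom,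
    ShiftedHom.mk₀_comp, ShiftedHom.comp_mk₀]
  rw [← smulId_app_single, ← smulId_app_single, ← smulId_app_shift]
  have h := (smulId (C := C) r).naturality
    (show (DerivedCategory.singleFunctor C 0).obj X ⟶
      ((DerivedCategory.singleFunctor C 0).obj Y)⟦((1 : ℕ) : ℤ)⟧ from α.hom)
  simpa using h.symm


lemma comp_ext_zero_of_smul_injective [HasExt.{w} C]
    {X Z Y : C} (π : X ⟶ Z) (r : R) (g : Y ⟶ Y) (hg : g = r • 𝟙 Y)
    (hinj : Function.Injective
      (fun e : Abelian.Ext X Y 1 => e.comp (Abelian.Ext.mk₀ g) (add_zero 1)))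
    (N : ℕ) (hcomp : ((r ^ N : R) • 𝟙 X) ≫ π = 0)
    (e : Abelian.Ext Z Y 1) :
    (Abelian.Ext.mk₀ π).comp e (zero_add 1) = 0 := by
  subst hg
  set f : Abelian.Ext X Y 1 := (Abelian.Ext.mk₀ π).comp e (zero_add 1) with hf
  have hzero : (Abelian.Ext.mk₀ ((r ^ N : R) • 𝟙 X)).comp f (zero_add 1) = 0 := by
    rw [hf, Abelian.Ext.mk₀_comp_mk₀_assoc, hcomp, Abelian.Ext.mk₀_zero,
      Abelian.Ext.zero_comp]
  have key : ∀ m : ℕ,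
      (Abelian.Ext.mk₀ ((r ^ m : R) • 𝟙 X)).comp f (zero_add 1) = 0 → f = 0 := by
    intro m
    induction m with
    | zero =>
      intro h
      rw [pow_zero, one_smul] at h
      rwa [Abelian.Ext.mk₀_id_comp] at h
    | succ m ih =>
      intro h
      apply ih
      apply hinj
      show ((Abelian.Ext.mk₀ ((r ^ m : R) • 𝟙 X)).comp f (zero_add 1)).comp
          (Abelian.Ext.mk₀ (r • 𝟙 Y)) (add_zero 1)
        = (0 : Abelian.Ext X Y 1).comp (Abelian.Ext.mk₀ (r • 𝟙 Y)) (add_zero 1)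
      rw [Abelian.Ext.zero_comp]
      rw [Abelian.Ext.comp_assoc_of_third_deg_zero]
      rw [← ext_smul_comm r f]
      rw [Abelian.Ext.mk₀_comp_mk₀_assoc]
      have heq : ((r ^ m : R) • 𝟙 X) ≫ (r • 𝟙 X) = (r ^ (m + 1) : R) • 𝟙 X := by
        rw [Linear.smul_comp, Linear.comp_smul, Category.comp_id, smul_smul, ← pow_succ]
      rw [heq]
      exact h
  exact key N hzero

end ExtCentralAux




open MvPolynomial CategoryTheory

universe u

set_option maxHeartbeats 1000000 in
/-- Corollary 3.12.  Let `S` be a standard graded polynomial ring over an infinite field,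
`I^sat` a saturated one-dimensional homogeneous ideal with a transverse linear form `ℓ`
(a nonzerodivisor on `S/I^sat`), and suppose multiplication by `ℓ` is injective on
`Ext¹_S(I^sat, S/I^sat)`.  Then for every subideal `K ⊆ I^sat` with `ℓ^N·I^sat ⊆ K` for
some `N`, the natural map `Ext¹_S(I^sat/K, S/I^sat) → Ext¹_S(I^sat, S/I^sat)` is zero. -/
theorem ext_map_zero_of_ell_injective
    {k : Type u} [Field k] [Infinite k] {n : ℕ}
    (Isat : Ideal (MvPolynomial (Fin n) k))
    (hhom : ∀ f ∈ Isat, ∀ i : ℕ, homogeneousComponent i f ∈ Isat)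
    (hsat : Submodule.colon Isat ((Ideal.span (Set.range X) : Ideal (MvPolynomial (Fin n) k)) : Set (MvPolynomial (Fin n) k)) ≤ Isat)
    (hdim : ringKrullDim (MvPolynomial (Fin n) k ⧸ Isat) = 1)
    (ℓ : MvPolynomial (Fin n) k)
    (hℓ : ℓ ∈ homogeneousSubmodule (Fin n) k 1)
    (htrans : ∀ s : MvPolynomial (Fin n) k, ℓ * s ∈ Isat → s ∈ Isat) :
    letI S := MvPolynomial (Fin n) k
    letI := HasDerivedCategory.standard (ModuleCat.{u} S)
    haveI := hasExt_of_hasDerivedCategory (ModuleCat.{u} S)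
    letI X : ModuleCat S := ModuleCat.of S ↥Isat
    letI Y : ModuleCat S := ModuleCat.of S (S ⧸ (Isat : Submodule S S))
    -- multiplication by `ℓ` on `Ext¹(I^sat, S/I^sat)` is injective
    (Function.Injective (fun e : Abelian.Ext X Y 1 =>
        e.comp (Abelian.Ext.mk₀ (ModuleCat.ofHom (LinearMap.lsmul S Y ℓ)))
          (add_zero 1))) →
    ∀ K : Ideal S, K ≤ Isat →
      (∃ N : ℕ, ∀ x ∈ Isat, ℓ ^ N * x ∈ K) →
      -- the natural map `Ext¹(I^sat/K, S/I^sat) → Ext¹(I^sat, S/I^sat)` vanishes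
      ∀ e : Abelian.Ext
          (ModuleCat.of S (↥Isat ⧸ Submodule.comap Isat.subtype (K : Submodule S S))) Y 1,
        (Abelian.Ext.mk₀
            (ModuleCat.ofHom
              (Submodule.mkQ (Submodule.comap Isat.subtype (K : Submodule S S))))).comp
          e (zero_add 1) = 0 := by
  intro hinj K hK hNex e
  obtain ⟨N, hN⟩ := hNex
  letI := HasDerivedCategory.standard (ModuleCat.{u} (MvPolynomial (Fin n) k))
  haveI := hasExt_of_hasDerivedCategory (ModuleCat.{u} (MvPolynomial (Fin n) k))
  refine ExtCentralAux.comp_ext_zero_of_smul_injective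
    (R := MvPolynomial (Fin n) k) _ ℓ _ ?_ hinj N ?_ e
  · apply ModuleCat.hom_ext
    apply LinearMap.ext
    intro y
    rfl
  · apply ModuleCat.hom_ext
    apply LinearMap.ext
    intro x
    show Submodule.mkQ (Submodule.comap Isat.subtype (K : Submodule _ _))
      ((ℓ ^ N : MvPolynomial (Fin n) k) • x) = 0
    rw [Submodule.mkQ_apply, Submodule.Quotient.mk_eq_zero, Submodule.mem_comap]
    simpa [smul_eq_mul] using hN _ x.2
end

section
/- Let S = k[α₀,α₁,α₂] over a field k of characteristic 0 or > d, F a nonzero degree-d form in the dual variables, G = α₀ ∘ F ≠ 0, and suppose Ann(F)_{≤e} ⊆ (α₀) for some e. Then for every a ≤ e − 1, multiplication by α₀ gives a bijection Ann(G)_a → Ann(F)_{a+1}, and consequently the Hilbert functions f of S/Ann(F) and g of S/Ann(G) satisfy f(a+1) = a + 2 + g(a) for all a ≤ e − 1. -/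
open MvPolynomial

variable {k : Type*} [Field k]

open scoped Classical

lemma contract_zero_left (f : MvPolynomial (Fin 3) k) : contract 0 f = 0 := by
  simp [contract]

lemma inner_zero (a : Fin 3 →₀ ℕ) (f : MvPolynomial (Fin 3) k) :
    ((AddMonoidAlgebra.coeff f).sum fun b d => if a ≤ b then monomial (b - a) ((0:k) * d) else 0) = 0 := by
  simp [Finsupp.sum]

lemma contract_monomial_left (a : Fin 3 →₀ ℕ) (c : k) (f : MvPolynomial (Fin 3) k) :
    contract (monomial a c) f
      = (AddMonoidAlgebra.coeff f).sum fun b d => if a ≤ b then monomial (b - a) (c * d) else 0 := by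
  rw [contract, ← single_eq_monomial, AddMonoidAlgebra.coeff_single, Finsupp.sum_single_index (inner_zero a f)]

lemma contract_add_left (p q f : MvPolynomial (Fin 3) k) :
    contract (p + q) f = contract p f + contract q f := by
  rw [contract, contract, contract, AddMonoidAlgebra.coeff_add, Finsupp.sum_add_index]
  · intro a _; exact inner_zero a f
  · intro a _ c1 c2
    rw [← Finsupp.sum_add]
    apply Finsupp.sum_congr
    intro b _
    split_ifs with h
    · rw [add_mul, map_add]
    · rw [add_zero]

lemma contract_smul_left (c : k) (p f : MvPolynomial (Fin 3) k) :
    contract (c • p) f = c • contract p f := by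
  rw [contract, contract, AddMonoidAlgebra.coeff_smul, Finsupp.sum_smul_index (fun a => inner_zero a f),
    Finsupp.smul_sum]
  apply Finsupp.sum_congr
  intro a _
  rw [Finsupp.smul_sum]
  apply Finsupp.sum_congr
  intro b _
  split_ifs with h
  · simp [smul_monomial, mul_assoc]
  · rw [smul_zero]

lemma contract_zero_right (p : MvPolynomial (Fin 3) k) : contract p 0 = 0 := by
  simp [contract]

lemma contract_add_right (p f g : MvPolynomial (Fin 3) k) :
    contract p (f + g) = contract p f + contract p g := by
  rw [contract, contract, contract, ← Finsupp.sum_add]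
  apply Finsupp.sum_congr
  intro a _
  rw [AddMonoidAlgebra.coeff_add, Finsupp.sum_add_index]
  · intro b _; simp
  · intro b _ d1 d2
    split_ifs with h
    · rw [mul_add, map_add]
    · rw [add_zero]

lemma contract_monomial_monomial (a b : Fin 3 →₀ ℕ) (c d : k) :
    contract (monomial a c) (monomial b d)
      = if a ≤ b then monomial (b - a) (c * d) else 0 := by
  rw [contract_monomial_left, ← single_eq_monomial b d, AddMonoidAlgebra.coeff_single, Finsupp.sum_single_index]
  simp

lemma contract_mul (p q f : MvPolynomial (Fin 3) k) :
    contract (p * q) f = contract q (contract p f) := by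
  induction p using MvPolynomial.induction_on' generalizing f with
  | add p1 p2 h1 h2 =>
    rw [add_mul, contract_add_left, h1, h2, contract_add_left, contract_add_right]
  | monomial a c =>
    induction q using MvPolynomial.induction_on' generalizing f with
    | add q1 q2 h1 h2 =>
      rw [mul_add, contract_add_left, h1, h2, contract_add_left]
    | monomial a' c' =>
      induction f using MvPolynomial.induction_on' with
      | add f1 f2 h1 h2 =>
        rw [contract_add_right, h1, h2, ← contract_add_right, ← contract_add_right]
      | monomial b d =>
        rw [monomial_mul, contract_monomial_monomial, contract_monomial_monomial]
        by_cases hab : a ≤ b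
        · rw [if_pos hab, contract_monomial_monomial, tsub_tsub]
          have hiff : a' ≤ b - a ↔ a + a' ≤ b := le_tsub_iff_left hab
          by_cases h : a + a' ≤ b
          · rw [if_pos h, if_pos (hiff.mpr h)]
            ring_nf
          · rw [if_neg h, if_neg (fun hh => h (hiff.mp hh))]
        · rw [if_neg hab, contract_zero_right,
            if_neg (fun h => hab (le_trans le_self_add h))]

noncomputable def annSub (F : MvPolynomial (Fin 3) k) (a : ℕ) :
    Submodule k (MvPolynomial (Fin 3) k) where
  carrier := {σ | σ ∈ homogeneousSubmodule (Fin 3) k a ∧ contract σ F = 0}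
  add_mem' := fun h1 h2 =>
    ⟨Submodule.add_mem _ h1.1 h2.1, by rw [contract_add_left, h1.2, h2.2, add_zero]⟩
  zero_mem' := ⟨Submodule.zero_mem _, contract_zero_left F⟩
  smul_mem' := fun c x hx =>
    ⟨Submodule.smul_mem _ c hx.1, by rw [contract_smul_left, hx.2, smul_zero]⟩

lemma span_annSub (F : MvPolynomial (Fin 3) k) (a : ℕ) :
    Submodule.span k {σ | σ ∈ homogeneousSubmodule (Fin 3) k a ∧ contract σ F = 0}
      = annSub F a :=
  Submodule.span_eq (annSub F a)

lemma degree_eq_sum_univ (d : Fin 3 →₀ ℕ) : d.degree = ∑ i, d i :=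
  Finset.sum_subset (Finset.subset_univ _)
    (fun x _ hx => Finsupp.notMem_support_iff.mp hx)

noncomputable def degSetEquiv (n : ℕ) :
    {d : Fin 3 →₀ ℕ | d.degree = n} ≃
      {f : Fin 3 → ℕ // f ∈ Finset.piAntidiag (Finset.univ : Finset (Fin 3)) n} :=
  (Finsupp.equivFunOnFinite).subtypeEquiv (fun d => by
    simp [Finset.mem_piAntidiag, ← degree_eq_sum_univ d, Finsupp.equivFunOnFinite])

noncomputable instance degSetFintype (n : ℕ) :
    Fintype {d : Fin 3 →₀ ℕ | d.degree = n} :=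
  Fintype.ofEquiv _ (degSetEquiv n).symm

lemma card_degSet (n : ℕ) :
    Fintype.card {d : Fin 3 →₀ ℕ | d.degree = n} = (n + 2).choose n := by
  rw [Fintype.card_congr (degSetEquiv n), Fintype.card_coe,
    ← Finset.map_sym_eq_piAntidiag, Finset.card_map, Finset.sym_univ, Finset.card_univ,
    Sym.card_sym_eq_multichoose, Nat.multichoose_eq]
  simp
  rw [Nat.add_comm]

noncomputable def homogBasis (n : ℕ) :
    Module.Basis {d : Fin 3 →₀ ℕ | d.degree = n} k ↥(homogeneousSubmodule (Fin 3) k n) :=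
  (basisRestrictSupport k _).map
    (LinearEquiv.ofEq _ _ (homogeneousSubmodule_eq_finsupp_supported (σ := Fin 3) (R := k) n)).symm

instance homogFinite (n : ℕ) :
    FiniteDimensional k ↥(homogeneousSubmodule (Fin 3) k n) :=
  Module.Finite.of_basis (homogBasis (k := k) n)

lemma finrank_homog (n : ℕ) :
    Module.finrank k ↥(homogeneousSubmodule (Fin 3) k n) = (n + 2).choose n := by
  rw [Module.finrank_eq_card_basis (homogBasis (k := k) n), card_degSet]

lemma choose_step (a : ℕ) :
    (a + 1 + 2).choose (a + 1) = (a + 2) + (a + 2).choose a := by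
  have h : ∀ n : ℕ, (n + 2).choose n = (n + 2).choose 2 := by
    intro n
    have := Nat.choose_symm (n := n + 2) (k := n) (by omega)
    rw [show n + 2 - n = 2 by omega] at this
    exact this.symm
  rw [h, h, show a + 1 + 2 = (a + 2) + 1 by omega,
    Nat.choose_succ_succ (a + 2) 1, Nat.choose_one_right]

lemma mul_X_homogComponent (τ : MvPolynomial (Fin 3) k) (a : ℕ)
    (hσ : X 0 * τ ∈ homogeneousSubmodule (Fin 3) k (a + 1)) :
    X 0 * homogeneousComponent a τ = X 0 * τ := by
  have hmem : ∀ i : ℕ, X 0 * homogeneousComponent i τ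
      ∈ homogeneousSubmodule (Fin 3) k (i + 1) := by
    intro i
    rw [mem_homogeneousSubmodule]
    simpa [Nat.add_comm] using
      (isHomogeneous_X k (0 : Fin 3)).mul (homogeneousComponent_isHomogeneous i τ)
  have h1 : X 0 * τ
      = ∑ i ∈ Finset.range (τ.totalDegree + 1), X 0 * homogeneousComponent i τ := by
    rw [← Finset.mul_sum, sum_homogeneousComponent]
  have h2 := congrArg (homogeneousComponent (a + 1)) h1
  rw [homogeneousComponent_of_mem hσ, if_pos rfl, map_sum] at h2
  have h3 : ∀ i ∈ Finset.range (τ.totalDegree + 1),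
      homogeneousComponent (a + 1) (X 0 * homogeneousComponent i τ)
        = if i = a then X 0 * homogeneousComponent i τ else 0 := by
    intro i _
    rw [homogeneousComponent_of_mem (hmem i)]
    exact if_congr (by omega) rfl rfl
  rw [Finset.sum_congr rfl h3, Finset.sum_ite_eq' (Finset.range (τ.totalDegree + 1))] at h2
  by_cases hr : a ∈ Finset.range (τ.totalDegree + 1)
  · rw [if_pos hr] at h2
    exact h2.symm
  · rw [if_neg hr] at h2
    rw [homogeneousComponent_eq_zero _ τ (by simpa using hr), mul_zero]
    exact h2.symm

/-- Part of the proof of Lemma 4.2.  Let `F ≠ 0` be a ternary degree-`d` form,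
`G = α₀ ∘ F ≠ 0`, and suppose `Ann(F)_{≤ e} ⊆ (α₀)`.  Then for every `a ≤ e − 1`,
multiplication by `α₀` is a bijection `Ann(G)_a → Ann(F)_{a+1}`, and consequently the
Hilbert functions `f` of `S/Ann(F)` and `g` of `S/Ann(G)` satisfy
`f(a+1) = a + 2 + g(a)` for all `a ≤ e − 1`. -/
theorem ann_bijection_and_hilbert_relation {d : ℕ} (hd : 0 < d)
    (hchar : ∀ i : ℕ, 0 < i → i ≤ d → (i : k) ≠ 0)
    (F : MvPolynomial (Fin 3) k) (hF : F ≠ 0) (hFhom : F.IsHomogeneous d)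
    (hG : contract (X 0) F ≠ 0)
    (e : ℕ)
    (hsub : ∀ a ≤ e, ∀ σ ∈ homogeneousSubmodule (Fin 3) k a,
      contract σ F = 0 → σ ∈ Ideal.span {(X 0 : MvPolynomial (Fin 3) k)}) :
    ∀ a : ℕ, a + 1 ≤ e →
      Set.BijOn (fun τ => X 0 * τ)
        {τ | τ ∈ homogeneousSubmodule (Fin 3) k a ∧ contract τ (contract (X 0) F) = 0}
        {σ | σ ∈ homogeneousSubmodule (Fin 3) k (a + 1) ∧ contract σ F = 0} ∧
      hilbAnn F (a + 1) = a + 2 + hilbAnn (contract (X 0) F) a := by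
  intro a ha
  have hmaps : Set.MapsTo (fun τ => X 0 * τ)
      {τ | τ ∈ homogeneousSubmodule (Fin 3) k a ∧ contract τ (contract (X 0) F) = 0}
      {σ | σ ∈ homogeneousSubmodule (Fin 3) k (a + 1) ∧ contract σ F = 0} := by
    rintro τ ⟨hτhom, hτG⟩
    rw [mem_homogeneousSubmodule] at hτhom
    constructor
    · exact (mem_homogeneousSubmodule _ _).mpr
        (by simpa [Nat.add_comm] using (isHomogeneous_X k (0 : Fin 3)).mul hτhom)
    · show contract (X 0 * τ) F = 0
      rw [contract_mul (X 0) τ F, hτG]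
  have hinj : Set.InjOn (fun τ => X 0 * τ)
      {τ | τ ∈ homogeneousSubmodule (Fin 3) k a ∧ contract τ (contract (X 0) F) = 0} :=
    fun τ1 _ τ2 _ h => mul_left_cancel₀ (X_ne_zero 0) h
  have hsurj : Set.SurjOn (fun τ => X 0 * τ)
      {τ | τ ∈ homogeneousSubmodule (Fin 3) k a ∧ contract τ (contract (X 0) F) = 0}
      {σ | σ ∈ homogeneousSubmodule (Fin 3) k (a + 1) ∧ contract σ F = 0} := by
    rintro σ ⟨hσhom, hσF⟩
    have hspan := hsub (a + 1) ha σ hσhom hσF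
    rw [Ideal.mem_span_singleton] at hspan
    obtain ⟨τ, rfl⟩ := hspan
    have key : X 0 * homogeneousComponent a τ = X 0 * τ :=
      mul_X_homogComponent τ a hσhom
    refine ⟨homogeneousComponent a τ, ⟨?_, ?_⟩, key⟩
    · exact (mem_homogeneousSubmodule _ _).mpr (homogeneousComponent_isHomogeneous a τ)
    · show contract (homogeneousComponent a τ) (contract (X 0) F) = 0
      rw [← contract_mul (X 0) (homogeneousComponent a τ) F, key]
      exact hσF
  refine ⟨⟨hmaps, hinj, hsurj⟩, ?_⟩
  -- dimension count
  set G := contract (X 0) F with hGdef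
  have hmaps' : ∀ x ∈ annSub G a, (LinearMap.mulLeft k (X 0)) x ∈ annSub F (a + 1) :=
    fun x hx => hmaps hx
  let L : annSub G a →ₗ[k] annSub F (a + 1) :=
    (LinearMap.mulLeft k (X 0)).restrict hmaps'
  have hLbij : Function.Bijective L := by
    constructor
    · rintro ⟨x, hx⟩ ⟨y, hy⟩ hxy
      have : X 0 * x = X 0 * y := congrArg Subtype.val hxy
      exact Subtype.ext (mul_left_cancel₀ (X_ne_zero 0) this)
    · rintro ⟨σ, hσ⟩
      obtain ⟨τ, hτ, hτσ⟩ := hsurj hσ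
      exact ⟨⟨τ, hτ⟩, Subtype.ext hτσ⟩
  have hfr : Module.finrank k ↥(annSub G a) = Module.finrank k ↥(annSub F (a + 1)) :=
    (LinearEquiv.ofBijective L hLbij).finrank_eq
  have hle1 : annSub G a ≤ homogeneousSubmodule (Fin 3) k a := fun x hx => hx.1
  have hle : Module.finrank k ↥(annSub G a)
      ≤ Module.finrank k ↥(homogeneousSubmodule (Fin 3) k a) :=
    Submodule.finrank_mono hle1
  have e1 : annPiece F (a + 1) = annSub F (a + 1) := span_annSub F (a + 1)
  have e2 : annPiece G a = annSub G a := span_annSub G a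
  rw [hilbAnn, hilbAnn, e1, e2, ← hfr]
  have hfS1 : Module.finrank k ↥(homogeneousSubmodule (Fin 3) k (a + 1))
      = (a + 1 + 2).choose (a + 1) := finrank_homog (a + 1)
  have hfS : Module.finrank k ↥(homogeneousSubmodule (Fin 3) k a)
      = (a + 2).choose a := finrank_homog a
  have hch := choose_step a
  omega
end

section
/- Let X be a scheme locally of finite type over a field k and φ : Spec(A) → X a morphism of k-schemes. Then there is a bijection, functorial in A, between Hom_A(H⁰(φ*Ω_{X/k}), A) and the set of morphisms φ' : Spec(A[ε]/ε²) → X whose restriction along Spec(A) ↪ Spec(A[ε]/ε²) equals φ. -/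
open scoped TensorProduct

universe u

section Aux

variable (k : Type u) [Field k] (R : Type u) [CommRing R] [Algebra k R]
variable (A : Type u) [CommRing A] [Algebra k A] [Algebra R A] [IsScalarTower k R A]

/-- From a derivation, an algebra hom to the trivial square zero extension. -/
def derivToTsze (δ : Derivation k R A) : R →ₐ[k] TrivSqZeroExt A A where
  toFun r := ⟨algebraMap R A r, δ r⟩
  map_one' := by
    refine TrivSqZeroExt.ext ?_ ?_ <;> simp
  map_mul' r s := by
    refine TrivSqZeroExt.ext ?_ ?_
    · simp [TrivSqZeroExt.fst_mul]
      rfl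
    · simp only [TrivSqZeroExt.snd_mul, Derivation.leibniz, smul_eq_mul,
        MulOpposite.smul_eq_mul_unop, MulOpposite.unop_op, Algebra.smul_def,
        TrivSqZeroExt.snd_mk, TrivSqZeroExt.fst_mk]
      show _ = algebraMap R A r • δ s + MulOpposite.op (algebraMap R A s) • δ r
      simp only [TrivSqZeroExt.snd_mul, smul_eq_mul, MulOpposite.smul_eq_mul_unop,
        MulOpposite.unop_op]
      ring
  map_zero' := by
    refine TrivSqZeroExt.ext ?_ ?_ <;> simp
  map_add' r s := by
    refine TrivSqZeroExt.ext ?_ ?_ <;> simp <;> rfl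
  commutes' c := by
    refine TrivSqZeroExt.ext ?_ ?_
    · simp [← IsScalarTower.algebraMap_apply, TrivSqZeroExt.algebraMap_eq_inl']
    · simp [TrivSqZeroExt.algebraMap_eq_inl']

/-- From a lift, a derivation. -/
def tszeToDeriv (f : R →ₐ[k] TrivSqZeroExt A A)
    (hf : ∀ r : R, (f r).fst = algebraMap R A r) : Derivation k R A where
  toFun r := (f r).snd
  map_add' r s := by simp
  map_smul' c r := by
    show (f (c • r)).snd = c • (f r).snd
    rw [Algebra.smul_def, map_mul, AlgHom.commutes, TrivSqZeroExt.snd_mul]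
    simp [TrivSqZeroExt.algebraMap_eq_inl', Algebra.smul_def,
      ← IsScalarTower.algebraMap_apply]
  map_one_eq_zero' := by simp
  leibniz' r s := by
    simp only [LinearMap.coe_mk, AddHom.coe_mk, map_mul, TrivSqZeroExt.snd_mul, hf,
      smul_eq_mul, MulOpposite.smul_eq_mul_unop, MulOpposite.unop_op, Algebra.smul_def]
    ring

end Aux

section Aux2

variable (k : Type u) [Field k] (R : Type u) [CommRing R] [Algebra k R]
variable (A : Type u) [CommRing A] [Algebra k A] [Algebra R A] [IsScalarTower k R A]

/-- The equivalence, affine case. -/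
noncomputable def liftEquiv :
    ((A ⊗[R] (Ω[R⁄k])) →ₗ[A] A) ≃
      {f : R →ₐ[k] TrivSqZeroExt A A // ∀ r : R, (f r).fst = algebraMap R A r} where
  toFun σ := ⟨derivToTsze k R A
      ((((LinearMap.liftBaseChangeEquiv A).symm σ)).compDer (KaehlerDifferential.D k R)),
    fun _ => rfl⟩
  invFun f :=
    LinearMap.liftBaseChangeEquiv A ((tszeToDeriv k R A f.1 f.2).liftKaehlerDifferential)
  left_inv σ := by
    have h : (tszeToDeriv k R A (derivToTsze k R A
        ((((LinearMap.liftBaseChangeEquiv A).symm σ)).compDer (KaehlerDifferential.D k R)))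
        (fun _ => rfl)).liftKaehlerDifferential = (LinearMap.liftBaseChangeEquiv A).symm σ := by
      apply Derivation.liftKaehlerDifferential_unique
      rw [Derivation.liftKaehlerDifferential_comp]
      rfl
    dsimp only
    rw [h, LinearEquiv.apply_symm_apply]
  right_inv f := by
    ext r
    · exact (f.2 r).symm
    · show ((((LinearMap.liftBaseChangeEquiv A).symm
          (LinearMap.liftBaseChangeEquiv A
            ((tszeToDeriv k R A f.1 f.2).liftKaehlerDifferential))).compDer
          (KaehlerDifferential.D k R)) r) = (f.1 r).snd
      rw [LinearEquiv.symm_apply_apply]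
      exact Derivation.liftKaehlerDifferential_comp_D _ r

end Aux2


/-- Lemma 2.13 (vector fields and the cotangent module), affine case.  Let `X = Spec R`
be a (finite type) `k`-scheme and `φ : Spec A → X` a morphism of `k`-schemes, i.e. an
algebra structure `Algebra R A` compatible with `k`.  Then there is a bijection,
functorial in `A`, between the module of pulled back vector fields
`Hom_A(H⁰(φ*Ω_{X/k}), A) = Hom_A(A ⊗_R Ω[R⁄k], A)` and the set of morphisms
`φ' : Spec A[ε]/ε² → X` (i.e. `k`-algebra maps `R → A[ε]/ε²`) restricting to `φ` on
`Spec A`.  Functoriality: if `g : A → B` is compatible with the structure maps and the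
vector fields `σA`, `σB` correspond under `g`, then so do the associated morphisms. -/
theorem vector_fields_equiv_dual_number_lifts
    (k : Type u) [Field k] (R : Type u) [CommRing R] [Algebra k R]
    [Algebra.FiniteType k R] :
    ∃ E : ∀ (A : Type u) [CommRing A] [Algebra k A] [Algebra R A]
        [IsScalarTower k R A],
        ((A ⊗[R] (Ω[R⁄k])) →ₗ[A] A) ≃
          {f : R →ₐ[k] TrivSqZeroExt A A //
            ∀ r : R, (f r).fst = algebraMap R A r},
      ∀ (A : Type u) [CommRing A] [Algebra k A] [Algebra R A] [IsScalarTower k R A]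
        (B : Type u) [CommRing B] [Algebra k B] [Algebra R B] [IsScalarTower k R B]
        (g : A →ₐ[R] B)
        (σA : (A ⊗[R] (Ω[R⁄k])) →ₗ[A] A) (σB : (B ⊗[R] (Ω[R⁄k])) →ₗ[B] B),
        (∀ w : Ω[R⁄k], σB ((1 : B) ⊗ₜ w) = g (σA ((1 : A) ⊗ₜ w))) →
        ∀ r : R,
          ((E B σB : {f : R →ₐ[k] TrivSqZeroExt B B // _}).1 r).fst =
              g (((E A σA).1 r).fst) ∧
            ((E B σB).1 r).snd = g (((E A σA).1 r).snd) := by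
  refine ⟨fun A _ _ _ _ => liftEquiv k R A, ?_⟩
  intro A _ _ _ _ B _ _ _ _ g σA σB hσ r
  constructor
  · show algebraMap R B r = g (algebraMap R A r)
    exact (g.commutes r).symm
  · show σB ((1 : B) ⊗ₜ KaehlerDifferential.D k R r)
      = g (σA ((1 : A) ⊗ₜ KaehlerDifferential.D k R r))
    exact hσ _
end
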